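/- arXiv:1305.3905 — 5 statements merged into one kernel-verified Lean document; each statement's English description precedes it below -/
import Mathlib

section
/- Let X, Y, Z be random variables taking values in finite sets such that X - Y - Z form a Markov chain (X and Z are conditionally independent given Y), and let f : G × 𝒵 → ℝ be any function where G is a finite set. Then the minimum over all functions g : 𝒳 × 𝒴 → G of E[f(g(X,Y), Z)] equals the minimum over all functions g : 𝒴 → G of E[f(g(Y), Z)]. -/
private lemma sum_fiber_mul {Ω β : Type} [Fintype Ω] [Fintype β] [DecidableEq β]
    (p : Ω → ℝ) (T : Ω → β) (F : β → ℝ) :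
    ∑ ω, p ω * F (T ω)
      = ∑ b, (∑ ω ∈ Finset.univ.filter (fun ω => T ω = b), p ω) * F b := by
  rw [← Finset.sum_fiberwise Finset.univ T (fun ω => p ω * F (T ω))]
  refine Finset.sum_congr rfl fun b _ => ?_
  rw [Finset.sum_mul]
  refine Finset.sum_congr rfl fun ω hω => ?_
  simp only [Finset.mem_filter] at hω
  rw [hω.2]

/-- If `X - Y - Z` is a Markov chain (finite-valued random variables on a
finite probability space), then for any function `f : G × 𝒵 → ℝ`,
`min_{g : 𝒳 × 𝒴 → G} E[f(g(X,Y), Z)] = min_{g : 𝒴 → G} E[f(g(Y), Z)]`. -/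
theorem stmt_0 {Ω 𝒳 𝒴 𝒵 G : Type} [Fintype Ω] [Fintype 𝒳] [Fintype 𝒴] [Fintype 𝒵]
    [Fintype G] [Nonempty G] [DecidableEq 𝒳] [DecidableEq 𝒴] [DecidableEq 𝒵]
    (p : Ω → ℝ) (hp : ∀ ω, 0 ≤ p ω) (hps : ∑ ω, p ω = 1)
    (X : Ω → 𝒳) (Y : Ω → 𝒴) (Z : Ω → 𝒵)
    (hMarkov : ∀ (x : 𝒳) (y : 𝒴) (z : 𝒵),
      (∑ ω ∈ Finset.univ.filter (fun ω => X ω = x ∧ Y ω = y ∧ Z ω = z), p ω) *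
        (∑ ω ∈ Finset.univ.filter (fun ω => Y ω = y), p ω)
      = (∑ ω ∈ Finset.univ.filter (fun ω => X ω = x ∧ Y ω = y), p ω) *
        (∑ ω ∈ Finset.univ.filter (fun ω => Y ω = y ∧ Z ω = z), p ω))
    (f : G × 𝒵 → ℝ) :
    (⨅ g : 𝒳 × 𝒴 → G, ∑ ω, p ω * f (g (X ω, Y ω), Z ω))
      = ⨅ g : 𝒴 → G, ∑ ω, p ω * f (g (Y ω), Z ω) := by
  classical
  let q3 : 𝒳 → 𝒴 → 𝒵 → ℝ :=
    fun x y z => ∑ ω ∈ Finset.univ.filter (fun ω => X ω = x ∧ Y ω = y ∧ Z ω = z), p ω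
  let q2 : 𝒳 → 𝒴 → ℝ :=
    fun x y => ∑ ω ∈ Finset.univ.filter (fun ω => X ω = x ∧ Y ω = y), p ω
  let qY : 𝒴 → ℝ := fun y => ∑ ω ∈ Finset.univ.filter (fun ω => Y ω = y), p ω
  let qYZ : 𝒴 → 𝒵 → ℝ :=
    fun y z => ∑ ω ∈ Finset.univ.filter (fun ω => Y ω = y ∧ Z ω = z), p ω
  have h3nn : ∀ x y z, 0 ≤ q3 x y z := fun x y z => Finset.sum_nonneg fun ω _ => hp ω
  have h2nn : ∀ x y, 0 ≤ q2 x y := fun x y => Finset.sum_nonneg fun ω _ => hp ω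
  have hYZnn : ∀ y z, 0 ≤ qYZ y z := fun y z => Finset.sum_nonneg fun ω _ => hp ω
  have hYnn : ∀ y, 0 ≤ qY y := fun y => Finset.sum_nonneg fun ω _ => hp ω
  have h3le : ∀ x y z, q3 x y z ≤ qY y := by
    intro x y z
    apply Finset.sum_le_sum_of_subset_of_nonneg
    · intro ω hω; simp only [Finset.mem_filter] at hω ⊢; tauto
    · intro ω _ _; exact hp ω
  have hYZle : ∀ y z, qYZ y z ≤ qY y := by
    intro y z
    apply Finset.sum_le_sum_of_subset_of_nonneg
    · intro ω hω; simp only [Finset.mem_filter] at hω ⊢; tauto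
    · intro ω _ _; exact hp ω
  -- expansion over triples
  have hA : ∀ g : 𝒳 × 𝒴 → G, ∑ ω, p ω * f (g (X ω, Y ω), Z ω)
      = ∑ y, ∑ x, ∑ z, q3 x y z * f (g (x, y), z) := by
    intro g
    rw [sum_fiber_mul p (fun ω => (Y ω, X ω, Z ω)) (fun b => f (g (b.2.1, b.1), b.2.2))]
    rw [Fintype.sum_prod_type]
    refine Finset.sum_congr rfl fun y _ => ?_
    rw [Fintype.sum_prod_type]
    refine Finset.sum_congr rfl fun x _ => ?_
    refine Finset.sum_congr rfl fun z _ => ?_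
    have hfe : Finset.univ.filter (fun ω => (Y ω, X ω, Z ω) = (y, x, z))
        = Finset.univ.filter (fun ω => X ω = x ∧ Y ω = y ∧ Z ω = z) := by
      apply Finset.filter_congr; intro ω _
      simp only [Prod.mk.injEq, eq_iff_iff]; try tauto
    rw [hfe]
  have hB : ∀ g' : 𝒴 → G, ∑ ω, p ω * f (g' (Y ω), Z ω)
      = ∑ y, ∑ z, qYZ y z * f (g' y, z) := by
    intro g'
    rw [sum_fiber_mul p (fun ω => (Y ω, Z ω)) (fun b => f (g' b.1, b.2))]
    rw [Fintype.sum_prod_type]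
    refine Finset.sum_congr rfl fun y _ => ?_
    refine Finset.sum_congr rfl fun z _ => ?_
    have hfe : Finset.univ.filter (fun ω => (Y ω, Z ω) = (y, z))
        = Finset.univ.filter (fun ω => Y ω = y ∧ Z ω = z) := by
      apply Finset.filter_congr; intro ω _
      simp only [Prod.mk.injEq, eq_iff_iff]; try tauto
    rw [hfe]
  have h2Y : ∀ y, ∑ x, q2 x y = qY y := by
    intro y
    show _ = ∑ ω ∈ Finset.univ.filter (fun ω => Y ω = y), p ω
    rw [← Finset.sum_fiberwise (Finset.univ.filter (fun ω => Y ω = y)) X (fun ω => p ω)]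
    refine Finset.sum_congr rfl fun x _ => ?_
    apply Finset.sum_congr _ (fun _ _ => rfl)
    rw [Finset.filter_filter]
    ext ω; simp only [Finset.mem_filter]; tauto
  -- choose the global minimizer
  have hmin : ∀ y, ∃ c : G, ∀ c' : G,
      ∑ z, qYZ y z * f (c, z) ≤ ∑ z, qYZ y z * f (c', z) := by
    intro y
    obtain ⟨c, -, hc⟩ := Finset.exists_min_image Finset.univ
      (fun c => ∑ z, qYZ y z * f (c, z)) ⟨Classical.arbitrary G, Finset.mem_univ _⟩
    exact ⟨c, fun c' => hc c' (Finset.mem_univ _)⟩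
  choose g₀ hg₀ using hmin
  have key : ∀ g : 𝒳 × 𝒴 → G,
      ∑ ω, p ω * f (g₀ (Y ω), Z ω) ≤ ∑ ω, p ω * f (g (X ω, Y ω), Z ω) := by
    intro g
    rw [hA g, hB g₀]
    apply Finset.sum_le_sum
    intro y _
    by_cases hy : qY y = 0
    · have h3z : ∀ x z, q3 x y z = 0 := fun x z =>
        le_antisymm ((h3le x y z).trans hy.le) (h3nn x y z)
      have hYZz : ∀ z, qYZ y z = 0 := fun z =>
        le_antisymm ((hYZle y z).trans hy.le) (hYZnn y z)
      simp [h3z, hYZz]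
    · have hypos : 0 < qY y := lt_of_le_of_ne (hYnn y) (Ne.symm hy)
      rw [← mul_le_mul_iff_right₀ hypos]
      have e1 : qY y * ∑ z, qYZ y z * f (g₀ y, z)
          = ∑ x, q2 x y * ∑ z, qYZ y z * f (g₀ y, z) := by
        rw [← Finset.sum_mul, h2Y]
      have e2 : qY y * ∑ x, ∑ z, q3 x y z * f (g (x, y), z)
          = ∑ x, q2 x y * ∑ z, qYZ y z * f (g (x, y), z) := by
        rw [Finset.mul_sum]
        refine Finset.sum_congr rfl fun x _ => ?_
        rw [Finset.mul_sum, Finset.mul_sum]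
        refine Finset.sum_congr rfl fun z _ => ?_
        rw [← mul_assoc, mul_comm (qY y) (q3 x y z), hMarkov x y z, mul_assoc]
      rw [e1, e2]
      apply Finset.sum_le_sum
      intro x _
      exact mul_le_mul_of_nonneg_left (hg₀ y (g (x, y))) (h2nn x y)
  have bdd1 : BddBelow (Set.range fun g : 𝒳 × 𝒴 → G =>
      ∑ ω, p ω * f (g (X ω, Y ω), Z ω)) := (Set.finite_range _).bddBelow
  have bdd2 : BddBelow (Set.range fun g : 𝒴 → G =>
      ∑ ω, p ω * f (g (Y ω), Z ω)) := (Set.finite_range _).bddBelow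
  apply le_antisymm
  · apply le_ciInf
    intro g'
    exact ciInf_le bdd1 (fun q => g' q.2)
  · apply le_ciInf
    intro g
    exact le_trans (ciInf_le bdd2 g₀) (key g)
end

section
/- For any random variables X_1, …, X_n and Y on finite alphabets, and any positive integer d, the inequality d · I(X^n ; Y) ≥ Σ_{i=1}^n I(X_i ; Y | X^{i−d}) holds, where X^{i−d} denotes (X_1, …, X_{i−d}) (the empty tuple when i ≤ d). -/
/-- Probability that the random variable `A` equals `a`, under pmf `p` on a finite space. -/
noncomputable def prb {Ω α : Type} [Fintype Ω] [DecidableEq α]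
    (p : Ω → ℝ) (A : Ω → α) (a : α) : ℝ :=
  ∑ ω ∈ Finset.univ.filter (fun ω => A ω = a), p ω

/-- Shannon entropy of a finite-valued random variable. -/
noncomputable def ent {Ω α : Type} [Fintype Ω] [Fintype α] [DecidableEq α]
    (p : Ω → ℝ) (A : Ω → α) : ℝ :=
  -∑ a, prb p A a * Real.log (prb p A a)

/-- Mutual information `I(A;B) = H(A) + H(B) − H(A,B)`. -/
noncomputable def mutInfo {Ω α β : Type} [Fintype Ω] [Fintype α] [Fintype β]
    [DecidableEq α] [DecidableEq β] (p : Ω → ℝ) (A : Ω → α) (B : Ω → β) : ℝ :=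
  ent p A + ent p B - ent p (fun ω => (A ω, B ω))

/-- Conditional mutual information `I(A;B|C) = H(A,C) + H(B,C) − H(A,B,C) − H(C)`. -/
noncomputable def condMutInfo {Ω α β γ : Type} [Fintype Ω] [Fintype α] [Fintype β] [Fintype γ]
    [DecidableEq α] [DecidableEq β] [DecidableEq γ]
    (p : Ω → ℝ) (A : Ω → α) (B : Ω → β) (C : Ω → γ) : ℝ :=
  ent p (fun ω => (A ω, C ω)) + ent p (fun ω => (B ω, C ω))
    - ent p (fun ω => (A ω, B ω, C ω)) - ent p C

open Finset

section aux
variable {Ω α β : Type} [Fintype Ω] {p : Ω → ℝ}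

lemma prb_nonneg [DecidableEq α] (hp : ∀ ω, 0 ≤ p ω) (A : Ω → α) (a : α) :
    0 ≤ prb p A a :=
  Finset.sum_nonneg fun ω _ => hp ω

lemma prb_sum [Fintype α] [DecidableEq α] (A : Ω → α) :
    ∑ a, prb p A a = ∑ ω, p ω := by
  unfold prb
  rw [Finset.sum_fiberwise_eq_sum_filter univ univ A p]
  simp

lemma prb_marg [Fintype α] [DecidableEq α] [DecidableEq β] (T : Ω → α) (f : α → β) (b : β) :
    prb p (fun ω => f (T ω)) b = ∑ a ∈ univ.filter (fun a => f a = b), prb p T a := by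
  unfold prb
  rw [Finset.sum_fiberwise_eq_sum_filter univ (univ.filter (fun a => f a = b)) T p]
  congr 1
  ext ω
  simp

/-- Entropy is invariant under two-sided recodings. -/
lemma ent_eq [Fintype α] [DecidableEq α] [Fintype β] [DecidableEq β]
    (A : Ω → α) (B : Ω → β) (f : α → β) (g : β → α)
    (hf : ∀ ω, f (A ω) = B ω) (hg : ∀ ω, g (B ω) = A ω) :
    ent p B = ent p A := by
  have key : ∀ b, prb p B b ≠ 0 → prb p A (g b) = prb p B b := by
    intro b hb
    obtain ⟨ω0, hω0⟩ := Finset.nonempty_of_sum_ne_zero hb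
    simp only [mem_filter, mem_univ, true_and] at hω0
    unfold prb
    apply Finset.sum_congr _ (fun _ _ => rfl)
    ext ω
    simp only [mem_filter, mem_univ, true_and]
    constructor
    · intro h
      calc B ω = f (A ω) := (hf ω).symm
        _ = f (g b) := by rw [h]
        _ = f (g (B ω0)) := by rw [hω0]
        _ = f (A ω0) := by rw [hg]
        _ = B ω0 := hf ω0
        _ = b := hω0
    · intro h
      rw [← h, hg]
  have keyA : ∀ a, prb p A a ≠ 0 → prb p B (f a) = prb p A a := by
    intro a ha
    obtain ⟨ω0, hω0⟩ := Finset.nonempty_of_sum_ne_zero ha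
    simp only [mem_filter, mem_univ, true_and] at hω0
    unfold prb
    apply Finset.sum_congr _ (fun _ _ => rfl)
    ext ω
    simp only [mem_filter, mem_univ, true_and]
    constructor
    · intro h
      calc A ω = g (B ω) := (hg ω).symm
        _ = g (f a) := by rw [h]
        _ = g (f (A ω0)) := by rw [hω0]
        _ = g (B ω0) := by rw [hf]
        _ = A ω0 := hg ω0
        _ = a := hω0
    · intro h
      rw [← h, hf]
  unfold ent
  congr 1
  classical
  rw [← Finset.sum_filter_ne_zero (f := fun b => prb p B b * Real.log (prb p B b)) univ,
      ← Finset.sum_filter_ne_zero (f := fun a => prb p A a * Real.log (prb p A a)) univ]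
  -- sums over supports
  apply Finset.sum_nbij' g f
  · intro b hb
    simp only [mem_filter, mem_univ, true_and] at hb ⊢
    intro h
    apply hb
    have hb' : prb p B b ≠ 0 := by
      intro h0; apply hb; rw [h0]; ring
    rw [key b hb'] at h
    exact h
  · intro a ha
    simp only [mem_filter, mem_univ, true_and] at ha ⊢
    intro h
    apply ha
    have ha' : prb p A a ≠ 0 := by
      intro h0; apply ha; rw [h0]; ring
    rw [keyA a ha'] at h
    exact h
  · intro b hb
    simp only [mem_filter, mem_univ, true_and] at hb
    have hb' : prb p B b ≠ 0 := by
      intro h0; apply hb; rw [h0]; ring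
    obtain ⟨ω0, hω0⟩ := Finset.nonempty_of_sum_ne_zero hb'
    simp only [mem_filter, mem_univ, true_and] at hω0
    rw [← hω0, hg, hf]
  · intro a ha
    simp only [mem_filter, mem_univ, true_and] at ha
    have ha' : prb p A a ≠ 0 := by
      intro h0; apply ha; rw [h0]; ring
    obtain ⟨ω0, hω0⟩ := Finset.nonempty_of_sum_ne_zero ha'
    simp only [mem_filter, mem_univ, true_and] at hω0
    rw [← hω0, hf, hg]
  · intro b hb
    simp only [mem_filter, mem_univ, true_and] at hb
    have hb' : prb p B b ≠ 0 := by
      intro h0; apply hb; rw [h0]; ring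
    rw [key b hb']

lemma ent_subsingleton [Fintype α] [DecidableEq α] [Subsingleton α]
    (hps : ∑ ω, p ω = 1) (A : Ω → α) : ent p A = 0 := by
  rcases isEmpty_or_nonempty α with h | h
  · unfold ent; simp
  · obtain ⟨a0⟩ := h
    have huniv : (univ : Finset α) = {a0} := by
      ext a; simp [Subsingleton.elim a a0]
    have hprb : prb p A a0 = 1 := by
      unfold prb
      rw [Finset.filter_true_of_mem (fun ω _ => Subsingleton.elim _ _)]
      exact hps
    unfold ent
    rw [huniv, Finset.sum_singleton, hprb]
    simp


lemma gibbs {ι : Type} [DecidableEq ι] (S : Finset ι) (r Q R : ι → ℝ)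
    (hr : ∀ i ∈ S, 0 ≤ r i)
    (hpos : ∀ i ∈ S, r i ≠ 0 → 0 < Q i ∧ 0 < R i)
    (hsum : ∑ i ∈ S.filter (fun i => r i ≠ 0), r i * (Q i / R i) ≤ ∑ i ∈ S, r i) :
    ∑ i ∈ S, r i * Real.log (Q i) ≤ ∑ i ∈ S, r i * Real.log (R i) := by
  classical
  have h0 : ∑ i ∈ S, (r i * Real.log (Q i) - r i * Real.log (R i)) ≤ 0 := by
    have hrest : ∑ i ∈ S, (r i * Real.log (Q i) - r i * Real.log (R i))
        = ∑ i ∈ S.filter (fun i => r i ≠ 0), (r i * Real.log (Q i) - r i * Real.log (R i)) := by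
      symm
      apply Finset.sum_filter_of_ne
      intro i _ h hri
      apply h
      rw [hri]; ring
    rw [hrest]
    have hbd : ∑ i ∈ S.filter (fun i => r i ≠ 0), (r i * Real.log (Q i) - r i * Real.log (R i))
        ≤ ∑ i ∈ S.filter (fun i => r i ≠ 0), (r i * (Q i / R i) - r i) := by
      apply Finset.sum_le_sum
      intro i hi
      simp only [mem_filter] at hi
      obtain ⟨hiS, hir⟩ := hi
      have hrpos : 0 < r i := lt_of_le_of_ne (hr i hiS) (Ne.symm hir)
      obtain ⟨hQ, hR⟩ := hpos i hiS hir
      have : Real.log (Q i) - Real.log (R i) = Real.log (Q i / R i) :=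
        (Real.log_div (ne_of_gt hQ) (ne_of_gt hR)).symm
      have hlog : Real.log (Q i / R i) ≤ Q i / R i - 1 :=
        Real.log_le_sub_one_of_pos (div_pos hQ hR)
      nlinarith [mul_le_mul_of_nonneg_left hlog (le_of_lt hrpos)]
    refine le_trans hbd ?_
    rw [Finset.sum_sub_distrib]
    have : ∑ i ∈ S.filter (fun i => r i ≠ 0), r i = ∑ i ∈ S, r i :=
      Finset.sum_filter_ne_zero S
    linarith
  rw [Finset.sum_sub_distrib] at h0
  linarith

set_option maxHeartbeats 1000000 in
lemma submod_core {α β γ : Type} [Fintype α] [Fintype β] [Fintype γ]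
    (r : α × β × γ → ℝ) (mAC : α → γ → ℝ) (mBC : β → γ → ℝ) (mC : γ → ℝ)
    (hmAC : ∀ a c, mAC a c = ∑ b, r (a, b, c))
    (hmBC : ∀ b c, mBC b c = ∑ a, r (a, b, c))
    (hmC : ∀ c, mC c = ∑ a, ∑ b, r (a, b, c))
    (hr : ∀ t, 0 ≤ r t) (hr1 : ∑ t, r t = 1) :
    ∑ ac : α × γ, mAC ac.1 ac.2 * Real.log (mAC ac.1 ac.2)
      + ∑ bc : β × γ, mBC bc.1 bc.2 * Real.log (mBC bc.1 bc.2)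
    ≤ (∑ t, r t * Real.log (r t)) + ∑ c, mC c * Real.log (mC c) := by
  classical
  -- pointwise lower bounds by the joint
  have hmACge : ∀ a b c, r (a, b, c) ≤ mAC a c := by
    intro a b c
    rw [hmAC]
    exact Finset.single_le_sum (fun b' _ => hr (a, b', c)) (mem_univ b)
  have hmBCge : ∀ a b c, r (a, b, c) ≤ mBC b c := by
    intro a b c
    rw [hmBC]
    exact Finset.single_le_sum (fun a' _ => hr (a', b, c)) (mem_univ a)
  have hmCge : ∀ a b c, r (a, b, c) ≤ mC c := by
    intro a b c
    rw [hmC]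
    calc r (a, b, c) ≤ ∑ b', r (a, b', c) :=
          Finset.single_le_sum (fun b' _ => hr (a, b', c)) (mem_univ b)
      _ ≤ ∑ a', ∑ b', r (a', b', c) :=
          Finset.single_le_sum (fun a' _ => Finset.sum_nonneg fun b' _ => hr (a', b', c))
            (mem_univ a)
  have hmCnn : ∀ c, 0 ≤ mC c := by
    intro c; rw [hmC]
    exact Finset.sum_nonneg fun a _ => Finset.sum_nonneg fun b _ => hr (a, b, c)
  have hmACnn : ∀ a c, 0 ≤ mAC a c := by
    intro a c; rw [hmAC]; exact Finset.sum_nonneg fun b _ => hr (a, b, c)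
  have hmBCnn : ∀ b c, 0 ≤ mBC b c := by
    intro b c; rw [hmBC]; exact Finset.sum_nonneg fun a _ => hr (a, b, c)
  have hsumA : ∀ c, ∑ a, mAC a c = mC c := by
    intro c; rw [hmC]
    exact Finset.sum_congr rfl fun a _ => hmAC a c
  have hsumB : ∀ c, ∑ b, mBC b c = mC c := by
    intro c; rw [hmC, Finset.sum_comm]
    exact Finset.sum_congr rfl fun b _ => hmBC b c
  have conv3 : ∀ F : α × β × γ → ℝ, ∑ t, F t = ∑ a, ∑ b, ∑ c, F (a, b, c) := by
    intro F
    rw [Fintype.sum_prod_type]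
    exact Finset.sum_congr rfl fun a _ => Fintype.sum_prod_type _
  have hr1' : ∑ a, ∑ b, ∑ c, r (a, b, c) = 1 := by rw [← conv3]; exact hr1
  have hsumC : ∑ c, mC c = 1 := by
    calc ∑ c, mC c = ∑ c, ∑ a, ∑ b, r (a, b, c) := Finset.sum_congr rfl fun c _ => hmC c
      _ = ∑ a, ∑ c, ∑ b, r (a, b, c) := Finset.sum_comm
      _ = ∑ a, ∑ b, ∑ c, r (a, b, c) := Finset.sum_congr rfl fun a _ => Finset.sum_comm
      _ = 1 := hr1'
  -- move the goal entirely to iterated sums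
  rw [conv3 (fun t => r t * Real.log (r t)),
      Fintype.sum_prod_type (f := fun ac : α × γ => mAC ac.1 ac.2 * Real.log (mAC ac.1 ac.2)),
      Fintype.sum_prod_type (f := fun bc : β × γ => mBC bc.1 bc.2 * Real.log (mBC bc.1 bc.2))]
  dsimp only
  -- rewrite the marginal entropy sums as triple sums
  have rwAC : ∑ a, ∑ c, mAC a c * Real.log (mAC a c)
      = ∑ a, ∑ b, ∑ c, r (a, b, c) * Real.log (mAC a c) := by
    refine Finset.sum_congr rfl fun a _ => ?_
    rw [Finset.sum_comm]
    refine Finset.sum_congr rfl fun c _ => ?_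
    conv_lhs => rw [hmAC]
    rw [Finset.sum_mul]
    exact Finset.sum_congr rfl fun b _ => by rw [← hmAC]
  have rwBC : ∑ b, ∑ c, mBC b c * Real.log (mBC b c)
      = ∑ a, ∑ b, ∑ c, r (a, b, c) * Real.log (mBC b c) := by
    calc ∑ b, ∑ c, mBC b c * Real.log (mBC b c)
        = ∑ b, ∑ c, ∑ a, r (a, b, c) * Real.log (mBC b c) := by
          refine Finset.sum_congr rfl fun b _ => Finset.sum_congr rfl fun c _ => ?_
          conv_lhs => rw [hmBC]
          rw [Finset.sum_mul]
          exact Finset.sum_congr rfl fun a _ => by rw [← hmBC]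
      _ = ∑ b, ∑ a, ∑ c, r (a, b, c) * Real.log (mBC b c) :=
          Finset.sum_congr rfl fun b _ => Finset.sum_comm
      _ = ∑ a, ∑ b, ∑ c, r (a, b, c) * Real.log (mBC b c) := Finset.sum_comm
  have rwC : ∑ c, mC c * Real.log (mC c)
      = ∑ a, ∑ b, ∑ c, r (a, b, c) * Real.log (mC c) := by
    calc ∑ c, mC c * Real.log (mC c)
        = ∑ c, ∑ a, ∑ b, r (a, b, c) * Real.log (mC c) := by
          refine Finset.sum_congr rfl fun c _ => ?_
          conv_lhs => rw [hmC]
          rw [Finset.sum_mul]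
          refine Finset.sum_congr rfl fun a _ => ?_
          rw [Finset.sum_mul]
          exact Finset.sum_congr rfl fun b _ => by rw [← hmC]
      _ = ∑ a, ∑ c, ∑ b, r (a, b, c) * Real.log (mC c) := Finset.sum_comm
      _ = ∑ a, ∑ b, ∑ c, r (a, b, c) * Real.log (mC c) :=
          Finset.sum_congr rfl fun a _ => Finset.sum_comm
  rw [rwAC, rwBC, rwC]
  -- combine into single sums of logs of products, pointwise
  have lhs_eq : ∑ a, ∑ b, ∑ c, r (a, b, c) * Real.log (mAC a c)
      + ∑ a, ∑ b, ∑ c, r (a, b, c) * Real.log (mBC b c)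
      = ∑ a, ∑ b, ∑ c, r (a, b, c) * Real.log (mAC a c * mBC b c) := by
    rw [← Finset.sum_add_distrib]
    refine Finset.sum_congr rfl fun a _ => ?_
    rw [← Finset.sum_add_distrib]
    refine Finset.sum_congr rfl fun b _ => ?_
    rw [← Finset.sum_add_distrib]
    refine Finset.sum_congr rfl fun c _ => ?_
    by_cases ht : r (a, b, c) = 0
    · simp [ht]
    · have h0 : 0 < r (a, b, c) := lt_of_le_of_ne (hr _) (Ne.symm ht)
      have h1 : 0 < mAC a c := lt_of_lt_of_le h0 (hmACge a b c)
      have h2 : 0 < mBC b c := lt_of_lt_of_le h0 (hmBCge a b c)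
      rw [Real.log_mul (ne_of_gt h1) (ne_of_gt h2)]
      ring
  have rhs_eq : ∑ a, ∑ b, ∑ c, r (a, b, c) * Real.log (r (a, b, c))
      + ∑ a, ∑ b, ∑ c, r (a, b, c) * Real.log (mC c)
      = ∑ a, ∑ b, ∑ c, r (a, b, c) * Real.log (r (a, b, c) * mC c) := by
    rw [← Finset.sum_add_distrib]
    refine Finset.sum_congr rfl fun a _ => ?_
    rw [← Finset.sum_add_distrib]
    refine Finset.sum_congr rfl fun b _ => ?_
    rw [← Finset.sum_add_distrib]
    refine Finset.sum_congr rfl fun c _ => ?_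
    by_cases ht : r (a, b, c) = 0
    · simp [ht]
    · have h0 : 0 < r (a, b, c) := lt_of_le_of_ne (hr _) (Ne.symm ht)
      have h3 : 0 < mC c := lt_of_lt_of_le h0 (hmCge a b c)
      rw [Real.log_mul (ne_of_gt h0) (ne_of_gt h3)]
      ring
  rw [lhs_eq, rhs_eq]
  -- Gibbs' inequality over the joint alphabet
  have main := gibbs (univ : Finset (α × β × γ)) r
      (fun t => mAC t.1 t.2.2 * mBC t.2.1 t.2.2) (fun t => r t * mC t.2.2)
      (fun t _ => hr t)
      (by
        rintro ⟨a, b, c⟩ _ ht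
        have h0 : 0 < r (a, b, c) := lt_of_le_of_ne (hr _) (Ne.symm ht)
        have h1 : 0 < mAC a c := lt_of_lt_of_le h0 (hmACge a b c)
        have h2 : 0 < mBC b c := lt_of_lt_of_le h0 (hmBCge a b c)
        have h3 : 0 < mC c := lt_of_lt_of_le h0 (hmCge a b c)
        exact ⟨mul_pos h1 h2, mul_pos h0 h3⟩)
      (by
        rw [hr1]
        have heq : ∀ t ∈ univ.filter (fun t : α × β × γ => r t ≠ 0),
            r t * (mAC t.1 t.2.2 * mBC t.2.1 t.2.2 / (r t * mC t.2.2))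
            = mAC t.1 t.2.2 * mBC t.2.1 t.2.2 / mC t.2.2 := by
          rintro ⟨a, b, c⟩ ht
          simp only [mem_filter, mem_univ, true_and] at ht
          have h0 : 0 < r (a, b, c) := lt_of_le_of_ne (hr _) (Ne.symm ht)
          have h3 : 0 < mC c := lt_of_lt_of_le h0 (hmCge a b c)
          simp only []
          field_simp
        rw [Finset.sum_congr rfl heq]
        have step1 : ∑ t ∈ univ.filter (fun t : α × β × γ => r t ≠ 0),
            mAC t.1 t.2.2 * mBC t.2.1 t.2.2 / mC t.2.2
            ≤ ∑ t ∈ univ.filter (fun t : α × β × γ => mC t.2.2 ≠ 0),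
                mAC t.1 t.2.2 * mBC t.2.1 t.2.2 / mC t.2.2 := by
          apply Finset.sum_le_sum_of_subset_of_nonneg
          · rintro ⟨a, b, c⟩ ht
            simp only [mem_filter, mem_univ, true_and] at ht ⊢
            have h0 : 0 < r (a, b, c) := lt_of_le_of_ne (hr _) (Ne.symm ht)
            exact ne_of_gt (lt_of_lt_of_le h0 (hmCge a b c))
          · intro t _ _
            exact div_nonneg (mul_nonneg (hmACnn _ _) (hmBCnn _ _)) (hmCnn _)
        refine le_trans step1 ?_
        calc ∑ t ∈ univ.filter (fun t : α × β × γ => mC t.2.2 ≠ 0),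
              mAC t.1 t.2.2 * mBC t.2.1 t.2.2 / mC t.2.2
            = ∑ t : α × β × γ,
                if mC t.2.2 ≠ 0 then mAC t.1 t.2.2 * mBC t.2.1 t.2.2 / mC t.2.2 else 0 :=
              Finset.sum_filter _ _
          _ = ∑ a, ∑ b, ∑ c, if mC c ≠ 0 then mAC a c * mBC b c / mC c else 0 :=
              conv3 _
          _ = ∑ a, ∑ c, ∑ b, if mC c ≠ 0 then mAC a c * mBC b c / mC c else 0 :=
              Finset.sum_congr rfl fun a _ => Finset.sum_comm
          _ = ∑ c, ∑ a, ∑ b, if mC c ≠ 0 then mAC a c * mBC b c / mC c else 0 :=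
              Finset.sum_comm
          _ = ∑ c, if mC c ≠ 0 then mC c else 0 := by
              refine Finset.sum_congr rfl fun c _ => ?_
              by_cases hc : mC c = 0
              · simp [hc]
              · simp only [Ne, hc, not_false_iff, if_true]
                calc ∑ a : α, ∑ b : β, mAC a c * mBC b c / mC c
                    = ∑ a : α, mAC a c := by
                      refine Finset.sum_congr rfl fun a _ => ?_
                      calc ∑ b, mAC a c * mBC b c / mC c
                          = ∑ b, mAC a c / mC c * mBC b c :=
                            Finset.sum_congr rfl fun b _ => by ring
                        _ = mAC a c / mC c * ∑ b, mBC b c := (Finset.mul_sum _ _ _).symm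
                        _ = mAC a c / mC c * mC c := by rw [hsumB]
                        _ = mAC a c := div_mul_cancel₀ _ hc
                  _ = mC c := hsumA c
          _ ≤ ∑ c, mC c := by
              refine Finset.sum_le_sum fun c _ => ?_
              by_cases hc : mC c = 0
              · simp [hc]
              · rw [if_pos hc]
          _ = 1 := hsumC)
  have e1 := conv3 (fun t => r t * Real.log (mAC t.1 t.2.2 * mBC t.2.1 t.2.2))
  have e2 := conv3 (fun t => r t * Real.log (r t * mC t.2.2))
  dsimp only at e1 e2
  rw [← e1, ← e2]
  exact main

lemma prb_fiber {Ω α γ : Type} [Fintype Ω] [DecidableEq α] [DecidableEq γ] [Fintype α]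
    (p : Ω → ℝ) (A : Ω → α) (C : Ω → γ) (c : γ) :
    prb p C c = ∑ a, prb p (fun ω => (A ω, C ω)) (a, c) := by
  classical
  unfold prb
  have h2 : ∀ a, (univ.filter (fun ω => C ω = c)).filter (fun ω => A ω = a)
      = univ.filter (fun ω => (A ω, C ω) = (a, c)) := by
    intro a; ext ω; simp only [mem_filter, mem_univ, true_and, Prod.mk.injEq]; tauto
  calc ∑ ω ∈ univ.filter (fun ω => C ω = c), p ω
      = ∑ ω ∈ (univ.filter (fun ω => C ω = c)).filter (fun ω => A ω ∈ univ), p ω :=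
        (Finset.sum_congr (Finset.filter_true_of_mem fun ω _ => mem_univ _) fun _ _ => rfl).symm
    _ = ∑ a, ∑ ω ∈ (univ.filter (fun ω => C ω = c)).filter (fun ω => A ω = a), p ω :=
        (Finset.sum_fiberwise_eq_sum_filter (univ.filter (fun ω => C ω = c)) univ A p).symm
    _ = ∑ a, ∑ ω ∈ univ.filter (fun ω => (A ω, C ω) = (a, c)), p ω :=
        Finset.sum_congr rfl fun a _ => by rw [h2]

lemma prb_fiber3 {Ω α β γ : Type} [Fintype Ω] [DecidableEq α] [DecidableEq β] [DecidableEq γ]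
    [Fintype β]
    (p : Ω → ℝ) (A : Ω → α) (B : Ω → β) (C : Ω → γ) (a : α) (c : γ) :
    prb p (fun ω => (A ω, C ω)) (a, c)
      = ∑ b, prb p (fun ω => (A ω, B ω, C ω)) (a, b, c) := by
  classical
  unfold prb
  have h2 : ∀ b, (univ.filter (fun ω => (A ω, C ω) = (a, c))).filter (fun ω => B ω = b)
      = univ.filter (fun ω => (A ω, B ω, C ω) = (a, b, c)) := by
    intro b; ext ω; simp only [mem_filter, mem_univ, true_and, Prod.mk.injEq]; tauto
  calc ∑ ω ∈ univ.filter (fun ω => (A ω, C ω) = (a, c)), p ω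
      = ∑ ω ∈ (univ.filter (fun ω => (A ω, C ω) = (a, c))).filter (fun ω => B ω ∈ univ), p ω :=
        (Finset.sum_congr (Finset.filter_true_of_mem fun ω _ => mem_univ _) fun _ _ => rfl).symm
    _ = ∑ b, ∑ ω ∈ (univ.filter (fun ω => (A ω, C ω) = (a, c))).filter (fun ω => B ω = b), p ω :=
        (Finset.sum_fiberwise_eq_sum_filter (univ.filter (fun ω => (A ω, C ω) = (a, c))) univ B p).symm
    _ = ∑ b, ∑ ω ∈ univ.filter (fun ω => (A ω, B ω, C ω) = (a, b, c)), p ω :=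
        Finset.sum_congr rfl fun b _ => by rw [h2]

lemma condMutInfo_nonneg {Ω α β γ : Type} [Fintype Ω] [Fintype α] [Fintype β] [Fintype γ]
    [DecidableEq α] [DecidableEq β] [DecidableEq γ]
    (p : Ω → ℝ) (hp : ∀ ω, 0 ≤ p ω) (hps : ∑ ω, p ω = 1)
    (A : Ω → α) (B : Ω → β) (C : Ω → γ) : 0 ≤ condMutInfo p A B C := by
  classical
  have hAC : ∀ a c, prb p (fun ω => (A ω, C ω)) (a, c)
      = ∑ b, prb p (fun ω => (A ω, B ω, C ω)) (a, b, c) := fun a c =>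
    prb_fiber3 p A B C a c
  have hBC : ∀ b c, prb p (fun ω => (B ω, C ω)) (b, c)
      = ∑ a, prb p (fun ω => (A ω, B ω, C ω)) (a, b, c) := by
    intro b c
    have h := prb_fiber3 p B A C b c
    rw [h]
    refine Finset.sum_congr rfl fun a _ => ?_
    unfold prb
    refine Finset.sum_congr ?_ fun _ _ => rfl
    ext ω; simp only [mem_filter, mem_univ, true_and, Prod.mk.injEq]; tauto
  have hC : ∀ c, prb p C c = ∑ a, ∑ b, prb p (fun ω => (A ω, B ω, C ω)) (a, b, c) := by
    intro c
    rw [prb_fiber p A C c]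
    exact Finset.sum_congr rfl fun a _ => prb_fiber3 p A B C a c
  have hr : ∀ t, 0 ≤ prb p (fun ω => (A ω, B ω, C ω)) t := prb_nonneg hp _
  have hr1 : ∑ t, prb p (fun ω => (A ω, B ω, C ω)) t = 1 := by
    rw [prb_sum]; exact hps
  have main := submod_core (prb p (fun ω => (A ω, B ω, C ω)))
      (fun a c => prb p (fun ω => (A ω, C ω)) (a, c))
      (fun b c => prb p (fun ω => (B ω, C ω)) (b, c))
      (prb p C) hAC hBC hC hr hr1
  simp only [Prod.mk.eta] at main
  unfold condMutInfo ent
  linarith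

/-- The prefix `(X_0, …, X_{m-1})` (truncated at `n`). -/
noncomputable def pfx {Ω 𝒳 : Type} {n : ℕ} (X : Fin n → Ω → 𝒳) (m : ℕ) :
    Ω → (Fin (min m n) → 𝒳) :=
  fun ω j => X ⟨j.1, lt_of_lt_of_le j.2 (min_le_right m n)⟩ ω

lemma tele_sum (a : ℕ → ℝ) (d n : ℕ) (hd : 0 < d)
    (hmono : ∀ m k : ℕ, m ≤ k → a m ≤ a k) (h0 : a 0 = 0) :
    ∑ k ∈ Finset.range n, (a (k + 1) - a (k + 1 - d)) ≤ (d : ℝ) * a n := by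
  classical
  have hb : ∀ j, 0 ≤ a (j + 1) - a j := fun j => sub_nonneg.2 (hmono j (j + 1) (Nat.le_succ j))
  have hterm : ∀ k, a (k + 1) - a (k + 1 - d)
      = ∑ j ∈ Finset.Ico (k + 1 - d) (k + 1), (a (j + 1) - a j) := by
    intro k
    rw [Finset.sum_Ico_eq_sub _ (by omega : k + 1 - d ≤ k + 1)]
    rw [Finset.sum_range_sub, Finset.sum_range_sub]
    ring
  calc ∑ k ∈ Finset.range n, (a (k + 1) - a (k + 1 - d))
      = ∑ k ∈ Finset.range n, ∑ j ∈ Finset.Ico (k + 1 - d) (k + 1), (a (j + 1) - a j) :=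
        Finset.sum_congr rfl fun k _ => hterm k
    _ = ∑ k ∈ Finset.range n, ∑ j ∈ Finset.range n,
          if j ∈ Finset.Ico (k + 1 - d) (k + 1) then a (j + 1) - a j else 0 := by
        refine Finset.sum_congr rfl fun k hk => ?_
        rw [Finset.sum_ite_mem]
        congr 1
        rw [Finset.inter_eq_right.mpr]
        intro j hj
        simp only [Finset.mem_Ico] at hj
        simp only [Finset.mem_range] at hk ⊢
        omega
    _ = ∑ j ∈ Finset.range n, ∑ k ∈ Finset.range n,
          if j ∈ Finset.Ico (k + 1 - d) (k + 1) then a (j + 1) - a j else 0 := Finset.sum_comm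
    _ ≤ ∑ j ∈ Finset.range n, (d : ℝ) * (a (j + 1) - a j) := by
        refine Finset.sum_le_sum fun j _ => ?_
        rw [← Finset.sum_filter, Finset.sum_const]
        have hsub : (Finset.range n).filter (fun k => j ∈ Finset.Ico (k + 1 - d) (k + 1))
            ⊆ Finset.Ico j (j + d) := by
          intro k hk
          simp only [Finset.mem_filter, Finset.mem_range, Finset.mem_Ico] at hk ⊢
          omega
        have hcard : ((Finset.range n).filter
            (fun k => j ∈ Finset.Ico (k + 1 - d) (k + 1))).card ≤ d := by
          have h := Finset.card_le_card hsub
          rwa [Nat.card_Ico, Nat.add_sub_cancel_left] at h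
        calc ((Finset.range n).filter
              (fun k => j ∈ Finset.Ico (k + 1 - d) (k + 1))).card • (a (j + 1) - a j)
            = (((Finset.range n).filter
              (fun k => j ∈ Finset.Ico (k + 1 - d) (k + 1))).card : ℝ) * (a (j + 1) - a j) :=
              nsmul_eq_mul _ _
          _ ≤ (d : ℝ) * (a (j + 1) - a j) :=
              mul_le_mul_of_nonneg_right (by exact_mod_cast hcard) (hb j)
    _ = (d : ℝ) * ∑ j ∈ Finset.range n, (a (j + 1) - a j) := (Finset.mul_sum _ _ _).symm
    _ = (d : ℝ) * (a n - a 0) := by rw [Finset.sum_range_sub]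
    _ = (d : ℝ) * a n := by rw [h0]; ring

end aux

/-- For random variables `X_1, …, X_n`, `Y` on finite alphabets and any positive
integer `d`: `d · I(X^n ; Y) ≥ ∑_{i=1}^n I(X_i ; Y | X^{i−d})`, where `X^{i−d}` denotes the
first `i − d` of the variables `X_1, …, X_n` (the empty tuple when `i ≤ d`).  Here `i : Fin n`
represents the `(i+1)`-st variable, so `X^{(i+1)−d}` has `i + 1 − d` components. -/
theorem stmt_6 {Ω 𝒳 𝒴 : Type} [Fintype Ω] [Fintype 𝒳] [Fintype 𝒴]
    [DecidableEq 𝒳] [DecidableEq 𝒴]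
    (p : Ω → ℝ) (hp : ∀ ω, 0 ≤ p ω) (hps : ∑ ω, p ω = 1)
    {n : ℕ} (X : Fin n → Ω → 𝒳) (Y : Ω → 𝒴) (d : ℕ) (hd : 0 < d) :
    (d : ℝ) * mutInfo p (fun ω => fun i => X i ω) Y
      ≥ ∑ i : Fin n, condMutInfo p (X i) Y
          (fun ω => fun j : Fin (i.1 + 1 - d) =>
            X ⟨j.1, by have h1 := j.2; have h2 := i.2; omega⟩ ω) := by
  classical
  -- monotonicity of m ↦ I(X^m ; Y)
  have hmono : ∀ m k : ℕ, m ≤ k →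
      mutInfo p (pfx X m) Y ≤ mutInfo p (pfx X k) Y := by
    intro m k hmk
    have hnn := condMutInfo_nonneg p hp hps (pfx X k) Y (pfx X m)
    have e1 : ent p (fun ω => (pfx X k ω, pfx X m ω)) = ent p (pfx X k) :=
      ent_eq (pfx X k) _
        (fun g => (g, fun j => g ⟨j.1, by have := j.2; omega⟩)) Prod.fst
        (fun ω => rfl) (fun ω => rfl)
    have e2 : ent p (fun ω => (pfx X k ω, Y ω, pfx X m ω))
        = ent p (fun ω => (pfx X k ω, Y ω)) :=
      ent_eq (fun ω => (pfx X k ω, Y ω)) _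
        (fun q => (q.1, q.2, fun j => q.1 ⟨j.1, by have := j.2; omega⟩))
        (fun q => (q.1, q.2.1)) (fun ω => rfl) (fun ω => rfl)
    have e3 : ent p (fun ω => (Y ω, pfx X m ω)) = ent p (fun ω => (pfx X m ω, Y ω)) :=
      ent_eq _ _ (fun q => (q.2, q.1)) (fun q => (q.2, q.1)) (fun ω => rfl) (fun ω => rfl)
    unfold condMutInfo at hnn
    rw [e1, e2, e3] at hnn
    unfold mutInfo
    linarith
  -- I(X^0 ; Y) = 0
  haveI hss : Subsingleton (Fin (min 0 n) → 𝒳) :=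
    ⟨fun f g => funext fun j => absurd j.2 (by omega)⟩
  have h0 : mutInfo p (pfx X 0) Y = 0 := by
    have h1 : ent p (pfx X 0) = 0 := ent_subsingleton hps _
    have h2 : ent p (fun ω => (pfx X 0 ω, Y ω)) = ent p Y :=
      ent_eq Y _ (fun y => ((fun j => absurd j.2 (by omega)), y)) Prod.snd
        (fun ω => congrArg (fun c => (c, Y ω)) (Subsingleton.elim _ _))
        (fun ω => rfl)
    unfold mutInfo
    rw [h1, h2]
    ring
  -- key bound: I(X_i ; Y | X^m) ≤ I(X^k ; Y) − I(X^m ; Y) for m ≤ i < k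
  have hkey : ∀ (i : Fin n) (m k : ℕ), m ≤ i.1 → i.1 < k →
      condMutInfo p (X i) Y (pfx X m)
        ≤ mutInfo p (pfx X k) Y - mutInfo p (pfx X m) Y := by
    intro i m k him hik
    have him' : m ≤ k := le_trans him (le_of_lt hik)
    have hi' : i.1 < min k n := by have := i.2; omega
    have hnn := condMutInfo_nonneg p hp hps (pfx X k) Y (fun ω => (X i ω, pfx X m ω))
    have f1 : ent p (fun ω => (pfx X k ω, X i ω, pfx X m ω)) = ent p (pfx X k) :=
      ent_eq (pfx X k) _
        (fun g => (g, g ⟨i.1, hi'⟩, fun j => g ⟨j.1, by have := j.2; omega⟩))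
        Prod.fst (fun ω => rfl) (fun ω => rfl)
    have f2 : ent p (fun ω => (Y ω, X i ω, pfx X m ω))
        = ent p (fun ω => (X i ω, Y ω, pfx X m ω)) :=
      ent_eq (fun ω => (X i ω, Y ω, pfx X m ω)) _
        (fun q => (q.2.1, q.1, q.2.2)) (fun q => (q.2.1, q.1, q.2.2))
        (fun ω => rfl) (fun ω => rfl)
    have f3 : ent p (fun ω => (pfx X k ω, Y ω, X i ω, pfx X m ω))
        = ent p (fun ω => (pfx X k ω, Y ω)) :=
      ent_eq (fun ω => (pfx X k ω, Y ω)) _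
        (fun q => (q.1, q.2, q.1 ⟨i.1, hi'⟩, fun j => q.1 ⟨j.1, by have := j.2; omega⟩))
        (fun q => (q.1, q.2.1)) (fun ω => rfl) (fun ω => rfl)
    have f4 : ent p (fun ω => (Y ω, pfx X m ω)) = ent p (fun ω => (pfx X m ω, Y ω)) :=
      ent_eq _ _ (fun q => (q.2, q.1)) (fun q => (q.2, q.1)) (fun ω => rfl) (fun ω => rfl)
    unfold condMutInfo at hnn ⊢
    rw [f1, f2, f3] at hnn
    rw [f4]
    unfold mutInfo
    linarith
  -- the goal's conditioning variables agree with `pfx`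
  have hterm : ∀ i : Fin n,
      condMutInfo p (X i) Y
          (fun ω => fun j : Fin (i.1 + 1 - d) =>
            X ⟨j.1, by have h1 := j.2; have h2 := i.2; omega⟩ ω)
        = condMutInfo p (X i) Y (pfx X (i.1 + 1 - d)) := by
    intro i
    have e_a : ent p (fun ω => (X i ω,
          (fun j : Fin (i.1 + 1 - d) =>
            X ⟨j.1, by have h1 := j.2; have h2 := i.2; omega⟩ ω)))
        = ent p (fun ω => (X i ω, pfx X (i.1 + 1 - d) ω)) :=
      ent_eq (fun ω => (X i ω, pfx X (i.1 + 1 - d) ω)) _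
        (fun q => (q.1, fun j : Fin (i.1 + 1 - d) =>
          q.2 ⟨j.1, by have := j.2; have := i.2; omega⟩))
        (fun q => (q.1, fun j : Fin (min (i.1 + 1 - d) n) =>
          q.2 ⟨j.1, by have := j.2; omega⟩))
        (fun ω => rfl) (fun ω => rfl)
    have e_b : ent p (fun ω => (Y ω,
          (fun j : Fin (i.1 + 1 - d) =>
            X ⟨j.1, by have h1 := j.2; have h2 := i.2; omega⟩ ω)))
        = ent p (fun ω => (Y ω, pfx X (i.1 + 1 - d) ω)) :=
      ent_eq (fun ω => (Y ω, pfx X (i.1 + 1 - d) ω)) _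
        (fun q => (q.1, fun j : Fin (i.1 + 1 - d) =>
          q.2 ⟨j.1, by have := j.2; have := i.2; omega⟩))
        (fun q => (q.1, fun j : Fin (min (i.1 + 1 - d) n) =>
          q.2 ⟨j.1, by have := j.2; omega⟩))
        (fun ω => rfl) (fun ω => rfl)
    have e_c : ent p (fun ω => (X i ω, Y ω,
          (fun j : Fin (i.1 + 1 - d) =>
            X ⟨j.1, by have h1 := j.2; have h2 := i.2; omega⟩ ω)))
        = ent p (fun ω => (X i ω, Y ω, pfx X (i.1 + 1 - d) ω)) :=
      ent_eq (fun ω => (X i ω, Y ω, pfx X (i.1 + 1 - d) ω)) _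
        (fun q => (q.1, q.2.1, fun j : Fin (i.1 + 1 - d) =>
          q.2.2 ⟨j.1, by have := j.2; have := i.2; omega⟩))
        (fun q => (q.1, q.2.1, fun j : Fin (min (i.1 + 1 - d) n) =>
          q.2.2 ⟨j.1, by have := j.2; omega⟩))
        (fun ω => rfl) (fun ω => rfl)
    have e_d : ent p (fun ω => (fun j : Fin (i.1 + 1 - d) =>
            X ⟨j.1, by have h1 := j.2; have h2 := i.2; omega⟩ ω))
        = ent p (pfx X (i.1 + 1 - d)) :=
      ent_eq (pfx X (i.1 + 1 - d)) _
        (fun q => fun j : Fin (i.1 + 1 - d) =>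
          q ⟨j.1, by have := j.2; have := i.2; omega⟩)
        (fun q => fun j : Fin (min (i.1 + 1 - d) n) =>
          q ⟨j.1, by have := j.2; omega⟩)
        (fun ω => rfl) (fun ω => rfl)
    unfold condMutInfo
    rw [e_a, e_b, e_c, e_d]
  -- the full tuple has the same mutual information as `pfx X n`
  have hgoal : mutInfo p (fun ω => fun i => X i ω) Y = mutInfo p (pfx X n) Y := by
    have g1 : ent p (fun ω => fun i : Fin n => X i ω) = ent p (pfx X n) :=
      ent_eq (pfx X n) _
        (fun q => fun i : Fin n => q ⟨i.1, by have := i.2; omega⟩)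
        (fun q => fun j : Fin (min n n) => q ⟨j.1, by have := j.2; omega⟩)
        (fun ω => rfl) (fun ω => rfl)
    have g2 : ent p (fun ω => ((fun i : Fin n => X i ω), Y ω))
        = ent p (fun ω => (pfx X n ω, Y ω)) :=
      ent_eq (fun ω => (pfx X n ω, Y ω)) _
        (fun q => ((fun i : Fin n => q.1 ⟨i.1, by have := i.2; omega⟩), q.2))
        (fun q => ((fun j : Fin (min n n) => q.1 ⟨j.1, by have := j.2; omega⟩), q.2))
        (fun ω => rfl) (fun ω => rfl)
    unfold mutInfo
    rw [g1, g2]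
  rw [ge_iff_le, hgoal]
  calc ∑ i : Fin n, condMutInfo p (X i) Y
          (fun ω => fun j : Fin (i.1 + 1 - d) =>
            X ⟨j.1, by have h1 := j.2; have h2 := i.2; omega⟩ ω)
      = ∑ i : Fin n, condMutInfo p (X i) Y (pfx X (i.1 + 1 - d)) :=
        Finset.sum_congr rfl fun i _ => hterm i
    _ ≤ ∑ i : Fin n, (mutInfo p (pfx X (i.1 + 1)) Y - mutInfo p (pfx X (i.1 + 1 - d)) Y) :=
        Finset.sum_le_sum fun i _ => hkey i (i.1 + 1 - d) (i.1 + 1) (by omega) (by omega)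
    _ = ∑ k ∈ Finset.range n,
          (mutInfo p (pfx X (k + 1)) Y - mutInfo p (pfx X (k + 1 - d)) Y) :=
        Fin.sum_univ_eq_sum_range
          (fun k => mutInfo p (pfx X (k + 1)) Y - mutInfo p (pfx X (k + 1 - d)) Y) n
    _ ≤ (d : ℝ) * mutInfo p (pfx X n) Y :=
        tele_sum (fun m => mutInfo p (pfx X m) Y) d n hd hmono h0
end

section
/- Fix a finite alphabet 𝒳, an element x̄ ∈ 𝒳, and a positive integer n. Define 𝒜_n(x̄) = { p ∈ Δ_𝒳 : p(x̄) = max_{x'} p(x') and p(x̄) ∈ [1/(n+1), 1/n] }, and define ℱ = ℱ_n(x̄) ∪ ℱ_{n+1}(x̄), where ℱ_m(x̄) is the set of distributions uniform on some subset A ⊆ 𝒳 of size m whose maximum mass is attained at x̄ (i.e., x̄ ∈ A). Then 𝒜_n(x̄) is a convex set and its set of extreme points is exactly ℱ. -/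
/-- The uniform distribution on a finite subset `A` of `𝒳`. -/
noncomputable def unifOn {𝒳 : Type} [DecidableEq 𝒳] (A : Finset 𝒳) : 𝒳 → ℝ :=
  fun x => if x ∈ A then (1 : ℝ) / A.card else 0

/-- `𝒜_n(x̄)`: distributions whose maximum mass is attained at `x̄` and lies in
`[1/(n+1), 1/n]`. -/
def Aset {𝒳 : Type} [Fintype 𝒳] (xb : 𝒳) (n : ℕ) : Set (𝒳 → ℝ) :=
  {p | (∀ x, 0 ≤ p x) ∧ (∑ x, p x = 1) ∧ (∀ x', p x' ≤ p xb) ∧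
    (1 / (n + 1 : ℝ) ≤ p xb) ∧ (p xb ≤ 1 / (n : ℝ))}

/-- `ℱ_m(x̄)`: distributions uniform on a subset of size `m` containing `x̄`
(so the maximum mass is attained at `x̄`). -/
def Fset {𝒳 : Type} [DecidableEq 𝒳] (xb : 𝒳) (m : ℕ) : Set (𝒳 → ℝ) :=
  {p | ∃ A : Finset 𝒳, A.card = m ∧ xb ∈ A ∧ p = unifOn A}

section helpers
variable {𝒳 : Type} [Fintype 𝒳] [DecidableEq 𝒳]

variable {𝒳 : Type} [Fintype 𝒳] [DecidableEq 𝒳]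

noncomputable def pertS (p : 𝒳 → ℝ) (x0 : 𝒳) (S : Finset 𝒳) (δ : ℝ) : 𝒳 → ℝ :=
  fun x => if x = x0 then p x + S.card * δ else if x ∈ S then p x - δ else p x

lemma pertS_sum (p : 𝒳 → ℝ) (x0 : 𝒳) (S : Finset 𝒳) (δ : ℝ) (h : x0 ∉ S) :
    ∑ x, pertS p x0 S δ x = ∑ x, p x := by
  have key : ∀ x, pertS p x0 S δ x =
      p x + ((if x = x0 then (S.card : ℝ) * δ else 0) - (if x ∈ S then δ else 0)) := by
    intro x
    by_cases h1 : x = x0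
    · subst h1; simp [pertS, h]
    · by_cases h2 : x ∈ S <;> simp [pertS, h1, h2] <;> ring
  simp only [key]
  rw [Finset.sum_add_distrib, Finset.sum_sub_distrib, Finset.sum_ite_eq',
    Finset.sum_ite_mem, Finset.univ_inter, Finset.sum_const]
  simp

lemma pertS_openSegment (p : 𝒳 → ℝ) (x0 : 𝒳) (S : Finset 𝒳) (δ : ℝ) :
    p ∈ openSegment ℝ (pertS p x0 S δ) (pertS p x0 S (-δ)) := by
  refine ⟨1/2, 1/2, by norm_num, by norm_num, by norm_num, ?_⟩
  funext x
  simp only [Pi.add_apply, Pi.smul_apply, smul_eq_mul, pertS]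
  by_cases h1 : x = x0
  · simp [h1]; ring
  · by_cases h2 : x ∈ S <;> simp [h1, h2] <;> ring

lemma not_extreme_of_pert {xb : 𝒳} {n : ℕ} (p : 𝒳 → ℝ) (x0 : 𝒳) (S : Finset 𝒳) (δ : ℝ)
    (hδ : δ ≠ 0) (hS : 0 < S.card) (hx0 : x0 ∉ S)
    (hq : pertS p x0 S δ ∈ Aset xb n) (hr : pertS p x0 S (-δ) ∈ Aset xb n) :
    p ∉ Set.extremePoints ℝ (Aset xb n) := by
  rintro ⟨hp, hext⟩
  have hq' := hext hq hr (pertS_openSegment p x0 S δ)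
  have h2 := congrFun hq' x0
  simp only [pertS, if_pos rfl, if_true, eq_self_iff_true] at h2
  have hcδ : (S.card:ℝ) * δ = 0 := by linarith
  rcases mul_eq_zero.1 hcδ with h | h
  · rw [Nat.cast_eq_zero] at h; omega
  · exact hδ h

/-- membership lemma when xb is untouched -/
lemma pertS_mem_Aset₁ {xb : 𝒳} {n : ℕ} {p : 𝒳 → ℝ} {x0 : 𝒳} {S : Finset 𝒳} {δ : ℝ}
    (hp : p ∈ Aset xb n) (hx0 : x0 ∉ S) (hbx0 : xb ≠ x0) (hbS : xb ∉ S)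
    (h1 : 0 ≤ p x0 + S.card * δ) (h2 : ∀ x ∈ S, 0 ≤ p x - δ)
    (h3 : p x0 + S.card * δ ≤ p xb) (h4 : ∀ x ∈ S, p x - δ ≤ p xb) :
    pertS p x0 S δ ∈ Aset xb n := by
  obtain ⟨hpos, hsum, hmax, hlb, hub⟩ := hp
  have hxbv : pertS p x0 S δ xb = p xb := by simp [pertS, hbx0, hbS]
  refine ⟨?_, ?_, ?_, ?_, ?_⟩
  · intro x
    by_cases e1 : x = x0
    · subst e1; simpa [pertS] using h1
    · by_cases e2 : x ∈ S
      · simpa [pertS, e1, e2] using h2 x e2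
      · simpa [pertS, e1, e2] using hpos x
  · rw [pertS_sum p x0 S δ hx0]; exact hsum
  · intro x
    rw [hxbv]
    by_cases e1 : x = x0
    · subst e1; simpa [pertS] using h3
    · by_cases e2 : x ∈ S
      · simpa [pertS, e1, e2] using h4 x e2
      · simpa [pertS, e1, e2] using hmax x
  · rw [hxbv]; exact hlb
  · rw [hxbv]; exact hub

/-- membership lemma when xb ∈ S -/
lemma pertS_mem_Aset₂ {xb : 𝒳} {n : ℕ} {p : 𝒳 → ℝ} {x0 : 𝒳} {S : Finset 𝒳} {δ : ℝ}
    (hp : p ∈ Aset xb n) (hx0 : x0 ∉ S) (hbS : xb ∈ S)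
    (hSt : ∀ x ∈ S, p x = p xb)
    (h1 : 0 ≤ p x0 + S.card * δ) (h2 : 0 ≤ p xb - δ)
    (h3 : p x0 + S.card * δ ≤ p xb - δ)
    (h4 : ∀ x, x ≠ x0 → x ∉ S → p x ≤ p xb - δ)
    (h5 : 1/(n+1:ℝ) ≤ p xb - δ) (h6 : p xb - δ ≤ 1/(n:ℝ)) :
    pertS p x0 S δ ∈ Aset xb n := by
  obtain ⟨hpos, hsum, hmax, hlb, hub⟩ := hp
  have hbx0 : xb ≠ x0 := fun h => hx0 (h ▸ hbS)
  have hxbv : pertS p x0 S δ xb = p xb - δ := by simp [pertS, hbx0, hbS]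
  refine ⟨?_, ?_, ?_, ?_, ?_⟩
  · intro x
    by_cases e1 : x = x0
    · subst e1; simpa [pertS] using h1
    · by_cases e2 : x ∈ S
      · have := hSt x e2
        simp only [pertS, if_neg e1, if_pos e2, this]
        linarith
      · simpa [pertS, e1, e2] using hpos x
  · rw [pertS_sum p x0 S δ hx0]; exact hsum
  · intro x
    rw [hxbv]
    by_cases e1 : x = x0
    · subst e1; simpa [pertS] using h3
    · by_cases e2 : x ∈ S
      · have := hSt x e2
        simp only [pertS, if_neg e1, if_pos e2, this]
        exact le_refl _
      · simpa [pertS, e1, e2] using h4 x e1 e2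
  · rw [hxbv]; exact h5
  · rw [hxbv]; exact h6


lemma unifOn_sum {A : Finset 𝒳} (hA : A.Nonempty) : ∑ x, unifOn A x = 1 := by
  simp only [unifOn]
  rw [Finset.sum_ite_mem, Finset.univ_inter, Finset.sum_const, nsmul_eq_mul]
  have : (A.card : ℝ) ≠ 0 := by
    simp [Finset.card_ne_zero_of_mem hA.choose_spec]
  field_simp

lemma unifOn_mem_Aset {xb : 𝒳} {A : Finset 𝒳} {n : ℕ} (hn : 0 < n)
    (hxb : xb ∈ A) (hc : A.card = n ∨ A.card = n + 1) : unifOn A ∈ Aset xb n := by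
  have hA : A.Nonempty := ⟨xb, hxb⟩
  have hcpos : 0 < (A.card : ℝ) := by exact_mod_cast Finset.card_pos.2 hA
  have hub : unifOn A xb = 1 / A.card := by simp [unifOn, hxb]
  refine ⟨?_, unifOn_sum hA, ?_, ?_, ?_⟩
  · intro x; unfold unifOn; split <;> positivity
  · intro x'; rw [hub]; unfold unifOn; split
    · exact le_refl _
    · positivity
  · rw [hub]
    apply one_div_le_one_div_of_le hcpos  -- wrong direction? check
    rcases hc with h | h <;> rw [h] <;> push_cast <;> linarith
  · rw [hub]
    apply one_div_le_one_div_of_le (by exact_mod_cast hn)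
    rcases hc with h | h <;> rw [h] <;> push_cast <;> linarith

lemma eq_unifOn_of {xb : 𝒳} {A : Finset 𝒳} {n : ℕ} {q : 𝒳 → ℝ}
    (hxb : xb ∈ A) (hq : q ∈ Aset xb n) (hqb : q xb = 1 / A.card)
    (hz : ∀ x, x ∉ A → q x = 0) : q = unifOn A := by
  obtain ⟨hpos, hsum, hmax, -, -⟩ := hq
  have hcpos : 0 < (A.card : ℝ) := by exact_mod_cast Finset.card_pos.2 ⟨xb, hxb⟩
  have hsumA : ∑ x ∈ A, q x = 1 := by
    rw [← hsum, ← Finset.sum_subset (Finset.subset_univ A)]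
    intro x _ hx; exact hz x hx
  have hle : ∀ x ∈ A, q x ≤ 1 / A.card := fun x _ => hqb ▸ hmax x
  have hzero : ∑ x ∈ A, (1 / (A.card:ℝ) - q x) = 0 := by
    rw [Finset.sum_sub_distrib, hsumA, Finset.sum_const, nsmul_eq_mul]
    field_simp
    norm_num
  have := (Finset.sum_eq_zero_iff_of_nonneg (fun x hx => by linarith [hle x hx])).1 hzero
  funext x
  by_cases hx : x ∈ A
  · have := this x hx; simp only [unifOn, if_pos hx]; linarith
  · simp [unifOn, hx, hz x hx]

lemma combo_eq {a b u w c : ℝ} (ha : 0 < a) (hb : 0 < b) (hab : a + b = 1)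
    (hu : u ≤ c) (hw : w ≤ c) (h : a * u + b * w = c) : u = c ∧ w = c := by
  have h0 : a * (c - u) + b * (c - w) = 0 := by linear_combination c * hab - h
  have t1 : 0 ≤ a * (c - u) := mul_nonneg ha.le (by linarith)
  have t2 : 0 ≤ b * (c - w) := mul_nonneg hb.le (by linarith)
  have e1 : a * (c - u) = 0 := by linarith
  have e2 : b * (c - w) = 0 := by linarith
  constructor
  · rcases mul_eq_zero.1 e1 with h' | h' <;> linarith
  · rcases mul_eq_zero.1 e2 with h' | h' <;> linarith

lemma combo_eq' {a b u w c : ℝ} (ha : 0 < a) (hb : 0 < b) (hab : a + b = 1)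
    (hu : c ≤ u) (hw : c ≤ w) (h : a * u + b * w = c) : u = c ∧ w = c := by
  have h1 : a * (-u) + b * (-w) = -c := by linarith
  have := combo_eq ha hb hab (neg_le_neg hu) (neg_le_neg hw) h1
  constructor <;> linarith [this.1, this.2]

lemma combo_zero {a b u w : ℝ} (ha : 0 < a) (hb : 0 < b) (hu : 0 ≤ u) (hw : 0 ≤ w)
    (h : a * u + b * w = 0) : u = 0 := by nlinarith

lemma unifOn_extreme {xb : 𝒳} {A : Finset 𝒳} {n : ℕ} (hn : 0 < n)
    (hxb : xb ∈ A) (hc : A.card = n ∨ A.card = n + 1) :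
    unifOn A ∈ Set.extremePoints ℝ (Aset xb n) := by
  refine ⟨unifOn_mem_Aset hn hxb hc, ?_⟩
  intro q hq r hr hseg
  obtain ⟨a, b, ha, hb, hab, hcomb⟩ := hseg
  have hpt : ∀ x, a * q x + b * r x = unifOn A x := fun x => congrFun hcomb x
  have hubv : unifOn A xb = 1 / A.card := by simp [unifOn, hxb]
  -- endpoints' value at xb
  have hqxb : q xb = 1 / A.card ∧ r xb = 1 / A.card := by
    have h1 := hpt xb
    rw [hubv] at h1
    rcases hc with h | h
    · have hq1 : q xb ≤ 1 / A.card := h ▸ hq.2.2.2.2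
      have hr1 : r xb ≤ 1 / A.card := h ▸ hr.2.2.2.2
      exact combo_eq ha hb hab hq1 hr1 h1
    · have hq1 : 1 / (A.card:ℝ) ≤ q xb := by rw [h]; push_cast; exact hq.2.2.2.1
      have hr1 : 1 / (A.card:ℝ) ≤ r xb := by rw [h]; push_cast; exact hr.2.2.2.1
      exact combo_eq' ha hb hab hq1 hr1 h1
  have hzq : ∀ x, x ∉ A → q x = 0 := by
    intro x hx
    have h1 := hpt x
    rw [show unifOn A x = 0 by simp [unifOn, hx]] at h1
    exact combo_zero ha hb (hq.1 x) (hr.1 x) h1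
  have hzr : ∀ x, x ∉ A → r x = 0 := by
    intro x hx
    have h1 := hpt x
    rw [show unifOn A x = 0 by simp [unifOn, hx]] at h1
    rw [add_comm] at h1
    exact combo_zero hb ha (hr.1 x) (hq.1 x) h1
  exact eq_unifOn_of hxb hq hqxb.1 hzq


lemma forward {xb : 𝒳} {n : ℕ} (hn : 0 < n) {p : 𝒳 → ℝ}
    (hpe : p ∈ Set.extremePoints ℝ (Aset xb n)) : p ∈ Fset xb n ∪ Fset xb (n + 1) := by
  classical
  obtain ⟨hpos, hsum, hmax, hlb, hub⟩ := hpe.1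
  set t := p xb with ht
  have hnR : (0:ℝ) < n := by exact_mod_cast hn
  have htpos : 0 < t := lt_of_lt_of_le (by positivity) hlb
  set S : Finset 𝒳 := Finset.univ.filter (fun x => p x = t) with hS
  have hSmem : ∀ x, x ∈ S ↔ p x = t := by intro x; simp [hS]
  have hxbS : xb ∈ S := (hSmem xb).2 rfl
  have hk1 : 0 < S.card := Finset.card_pos.2 ⟨xb, hxbS⟩
  have hkR : (0:ℝ) < S.card := by exact_mod_cast hk1
  by_cases hmid : ∃ x, 0 < p x ∧ p x < t
  · exfalso
    obtain ⟨x0, hx0p, hx0t⟩ := hmid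
    have hx0b : xb ≠ x0 := fun h => by rw [← h] at hx0t; exact lt_irrefl _ hx0t
    have hx0S : x0 ∉ S := fun h => (ne_of_lt hx0t) ((hSmem x0).1 h)
    by_cases hmid2 : ∃ y, y ≠ x0 ∧ 0 < p y ∧ p y < t
    · -- two middle coordinates: swap between them
      obtain ⟨y0, hy0x0, hy0p, hy0t⟩ := hmid2
      have hy0b : xb ≠ y0 := fun h => by rw [← h] at hy0t; exact lt_irrefl _ hy0t
      set δ := min (min (p x0) (p y0)) (min (t - p x0) (t - p y0)) with hδ
      have hδpos : 0 < δ :=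
        lt_min (lt_min hx0p hy0p) (lt_min (by linarith) (by linarith))
      have m1 : δ ≤ p x0 := le_trans (min_le_left _ _) (min_le_left _ _)
      have m2 : δ ≤ p y0 := le_trans (min_le_left _ _) (min_le_right _ _)
      have m3 : δ ≤ t - p x0 := le_trans (min_le_right _ _) (min_le_left _ _)
      have m4 : δ ≤ t - p y0 := le_trans (min_le_right _ _) (min_le_right _ _)
      have hcard : (({y0} : Finset 𝒳).card : ℝ) = 1 := by simp
      have hx0y0 : x0 ∉ ({y0} : Finset 𝒳) := by
        simp only [Finset.mem_singleton]; exact fun h => hy0x0 h.symm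
      have hbnot : xb ∉ ({y0} : Finset 𝒳) := by
        simp only [Finset.mem_singleton]; exact fun h => hy0b h
      refine not_extreme_of_pert p x0 {y0} δ (ne_of_gt hδpos) (by simp) hx0y0 ?_ ?_ hpe
      · refine pertS_mem_Aset₁ hpe.1 hx0y0 hx0b hbnot ?_ ?_ ?_ ?_
        · rw [hcard]; linarith
        · intro x hx; rw [Finset.mem_singleton] at hx; subst hx; linarith
        · rw [hcard]; rw [← ht]; linarith
        · intro x hx; rw [Finset.mem_singleton] at hx; subst hx; rw [← ht]; linarith
      · refine pertS_mem_Aset₁ hpe.1 hx0y0 hx0b hbnot ?_ ?_ ?_ ?_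
        · rw [hcard]; linarith
        · intro x hx; rw [Finset.mem_singleton] at hx; subst hx; linarith
        · rw [hcard]; rw [← ht]; linarith
        · intro x hx; rw [Finset.mem_singleton] at hx; subst hx; rw [← ht]; linarith
    · -- exactly one middle coordinate x0
      push_neg at hmid2
      have hother : ∀ y, y ≠ x0 → p y = 0 ∨ p y = t := by
        intro y hy
        rcases eq_or_lt_of_le (hpos y) with h | h
        · exact Or.inl h.symm
        · exact Or.inr (le_antisymm (hmax y) (hmid2 y hy h))
      set k := S.card with hk
      -- sum identity
      have hsum2 : (k:ℝ) * t + p x0 = 1 := by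
        have key : ∀ x, p x = (if x = x0 then p x0 else 0) + (if x ∈ S then t else 0) := by
          intro x
          by_cases e1 : x = x0
          · subst e1; simp [hx0S]
          · rcases hother x e1 with h | h
            · have hxS : x ∉ S := fun hx => by
                rw [(hSmem x).1 hx] at h; exact absurd h (ne_of_gt htpos)
              simp [e1, hxS, h]
            · have hxS : x ∈ S := (hSmem x).2 h
              simp [e1, hxS, h]
        rw [Finset.sum_congr rfl (fun x _ => key x)] at hsum
        rw [Finset.sum_add_distrib, Finset.sum_ite_eq', Finset.sum_ite_mem,
          Finset.univ_inter, Finset.sum_const, nsmul_eq_mul] at hsum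
        simp only [Finset.mem_univ, if_true] at hsum
        linarith
      -- strict bounds
      have hn1 : (0:ℝ) < (n:ℝ) + 1 := by positivity
      have hstrict1 : 1/((n:ℝ)+1) < t := by
        rcases lt_or_eq_of_le hlb with h | h
        · exact h
        · exfalso
          have hv : p x0 = 1 - (k:ℝ) * (1/((n:ℝ)+1)) := by rw [h]; linarith
          have hinv : (1/((n:ℝ)+1)) * ((n:ℝ)+1) = 1 := by field_simp
          have e1 : (k:ℝ) < (n:ℝ) + 1 := by nlinarith
          have e2 : (n:ℝ) < (k:ℝ) := by nlinarith [hx0t, h]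
          have e1' : k < n + 1 := by exact_mod_cast e1
          have e2' : n < k := by exact_mod_cast e2
          omega
      have hstrict2 : t < 1/(n:ℝ) := by
        rcases lt_or_eq_of_le hub with h | h
        · exact h
        · exfalso
          have hv : p x0 = 1 - (k:ℝ) * (1/(n:ℝ)) := by rw [← h]; linarith
          have hinv : (1/(n:ℝ)) * (n:ℝ) = 1 := by field_simp
          have e1 : (k:ℝ) < (n:ℝ) := by nlinarith
          have e2 : (n:ℝ) - 1 < (k:ℝ) := by nlinarith [hx0t, h]
          have e1' : k < n := by exact_mod_cast e1
          have e2' : n ≤ k := by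
            have : (n:ℝ) < (k:ℝ) + 1 := by linarith
            have : n < k + 1 := by exact_mod_cast this
            omega
          omega
      set δ := min (min ((t - p x0)/((k:ℝ)+1)) (p x0 / (k:ℝ)))
        (min (t - 1/((n:ℝ)+1)) (1/(n:ℝ) - t)) with hδ
      have hkpos1 : (0:ℝ) < (k:ℝ) + 1 := by linarith
      have hδpos : 0 < δ := by
        apply lt_min (lt_min (div_pos (by linarith) hkpos1) (div_pos hx0p hkR))
          (lt_min (by linarith) (by linarith))
      have m1 : δ ≤ (t - p x0)/((k:ℝ)+1) := le_trans (min_le_left _ _) (min_le_left _ _)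
      have m2 : δ ≤ p x0 / (k:ℝ) := le_trans (min_le_left _ _) (min_le_right _ _)
      have m3 : δ ≤ t - 1/((n:ℝ)+1) := le_trans (min_le_right _ _) (min_le_left _ _)
      have m4 : δ ≤ 1/(n:ℝ) - t := le_trans (min_le_right _ _) (min_le_right _ _)
      have m1' : ((k:ℝ)+1) * δ ≤ t - p x0 := by
        have h' := (le_div_iff₀ hkpos1).1 m1; linarith
      have m2' : (k:ℝ) * δ ≤ p x0 := by
        have h' := (le_div_iff₀ hkR).1 m2; linarith
      have hSt : ∀ x ∈ S, p x = p xb := fun x hx => (hSmem x).1 hx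
      have hzero : ∀ x, x ≠ x0 → x ∉ S → p x = 0 := by
        intro x hx1 hx2
        rcases hother x hx1 with h | h
        · exact h
        · exact absurd ((hSmem x).2 h) hx2
      refine not_extreme_of_pert p x0 S δ (ne_of_gt hδpos) hk1 hx0S ?_ ?_ hpe
      · refine pertS_mem_Aset₂ hpe.1 hx0S hxbS hSt ?_ ?_ ?_ ?_ ?_ ?_
        · rw [← hk]; linarith [mul_nonneg hkR.le hδpos.le]
        · rw [← ht]; linarith [one_div_pos.2 hn1]
        · rw [← hk, ← ht]; linarith
        · intro x e1 e2; rw [hzero x e1 e2, ← ht]; linarith [one_div_pos.2 hn1]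
        · rw [← ht]; linarith
        · rw [← ht]; linarith
      · refine pertS_mem_Aset₂ hpe.1 hx0S hxbS hSt ?_ ?_ ?_ ?_ ?_ ?_
        · rw [← hk]; linarith [m2']
        · rw [← ht]; linarith
        · rw [← hk, ← ht]; linarith [mul_nonneg hkR.le hδpos.le]
        · intro x e1 e2; rw [hzero x e1 e2, ← ht]; linarith
        · rw [← ht]; linarith
        · rw [← ht]; linarith
  · -- no middle coordinate: p is uniform on S
    push_neg at hmid
    have hall : ∀ x, p x = if x ∈ S then t else 0 := by
      intro x
      rcases eq_or_lt_of_le (hpos x) with h | h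
      · have hxS : x ∉ S := fun hx => by
          rw [(hSmem x).1 hx] at h; exact absurd h.symm (ne_of_gt htpos)
        rw [if_neg hxS]; exact h.symm
      · have : t ≤ p x := hmid x h
        have hpx : p x = t := le_antisymm (hmax x) this
        rw [if_pos ((hSmem x).2 hpx)]; exact hpx
    set k := S.card with hk
    have hsum2 : (k:ℝ) * t = 1 := by
      rw [Finset.sum_congr rfl (fun x _ => hall x)] at hsum
      rw [Finset.sum_ite_mem, Finset.univ_inter, Finset.sum_const, nsmul_eq_mul] at hsum
      exact hsum
    have htk : t = 1/(k:ℝ) := by field_simp at hsum2 ⊢; linarith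
    have hpu : p = unifOn S := by
      funext x
      rw [hall x]
      unfold unifOn
      by_cases hx : x ∈ S
      · rw [if_pos hx, if_pos hx, htk]
      · rw [if_neg hx, if_neg hx]
    have hb1 : (n:ℝ) ≤ (k:ℝ) := by
      rw [htk] at hub
      exact le_of_one_div_le_one_div hkR hub
    have hb2 : (k:ℝ) ≤ (n:ℝ) + 1 := by
      rw [htk] at hlb
      exact le_of_one_div_le_one_div (by positivity) hlb
    have hb1' : n ≤ k := by exact_mod_cast hb1
    have hb2' : k ≤ n + 1 := by exact_mod_cast hb2
    rcases Nat.eq_or_lt_of_le hb1' with h | h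
    · exact Or.inl ⟨S, h.symm, hxbS, hpu⟩
    · exact Or.inr ⟨S, by omega, hxbS, hpu⟩


end helpers

/-- `𝒜_n(x̄)` is convex and its set of extreme points is exactly
`ℱ = ℱ_n(x̄) ∪ ℱ_{n+1}(x̄)`. -/
theorem stmt_8 {𝒳 : Type} [Fintype 𝒳] [DecidableEq 𝒳] (xb : 𝒳) (n : ℕ) (hn : 0 < n) :
    Convex ℝ (Aset xb n) ∧
    Set.extremePoints ℝ (Aset xb n) = Fset xb n ∪ Fset xb (n + 1) := by
  constructor
  · intro p hp q hq a b ha hb hab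
    obtain ⟨h1, h2, h3, h4, h5⟩ := hp
    obtain ⟨g1, g2, g3, g4, g5⟩ := hq
    refine ⟨?_, ?_, ?_, ?_, ?_⟩ <;>
      simp only [Pi.add_apply, Pi.smul_apply, smul_eq_mul]
    · intro x; exact add_nonneg (mul_nonneg ha (h1 x)) (mul_nonneg hb (g1 x))
    · rw [Finset.sum_add_distrib, ← Finset.mul_sum, ← Finset.mul_sum, h2, g2]; linarith
    · intro x
      exact add_le_add (mul_le_mul_of_nonneg_left (h3 x) ha)
        (mul_le_mul_of_nonneg_left (g3 x) hb)
    · have e : a * (1/((n:ℝ)+1)) + b * (1/((n:ℝ)+1)) = 1/((n:ℝ)+1) := by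
        rw [← add_mul, hab, one_mul]
      linarith [mul_le_mul_of_nonneg_left h4 ha, mul_le_mul_of_nonneg_left g4 hb]
    · have e : a * (1/(n:ℝ)) + b * (1/(n:ℝ)) = 1/(n:ℝ) := by
        rw [← add_mul, hab, one_mul]
      linarith [mul_le_mul_of_nonneg_left h5 ha, mul_le_mul_of_nonneg_left g5 hb]
  · ext p
    constructor
    · exact fun h => forward hn h
    · rintro (⟨A, hc, hxbA, rfl⟩ | ⟨A, hc, hxbA, rfl⟩)
      · exact unifOn_extreme hn hxbA (Or.inl hc)
      · exact unifOn_extreme hn hxbA (Or.inr hc)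
end

section
/- Let P_X ∈ Δ_𝒳 be a distribution on a finite set, let x̄ be a mode of P_X (a maximizer of P_X), and let N satisfy P_X(x̄) ∈ [1/(N+1), 1/N]. Then for every n ∈ {1,…,N}, P_X can be written as a finite convex combination of distributions each of which is uniform on a subset of 𝒳 of size exactly n. -/
lemma aux_decomp {𝒳 : Type} [Fintype 𝒳] [DecidableEq 𝒳] (n : ℕ) (hn : 1 ≤ n) :
    ∀ k : ℕ, ∀ P : 𝒳 → ℝ, (∀ x, 0 ≤ P x) → (∀ x, P x ≤ 1 / n) → (∑ x, P x = 1) →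
    (Finset.univ.filter (fun x => 0 < P x ∧ P x < 1 / n)).card ≤ k →
    ∃ w : Finset 𝒳 → ℝ, (∀ A, 0 ≤ w A) ∧ (∑ A : Finset 𝒳, w A = 1) ∧
      (∀ A, w A ≠ 0 → A.card = n) ∧
      ∀ x, P x = ∑ A : Finset 𝒳, w A * (if x ∈ A then (1 : ℝ) / n else 0) := by
  have hn0 : (0:ℝ) < n := by positivity
  have hn0' : (0:ℝ) < 1 / n := by positivity
  intro k
  induction k with
  | zero =>
    intro P hP0 hPb hPs hcard
    have hfe : Finset.univ.filter (fun x => 0 < P x ∧ P x < 1 / n) = ∅ :=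
      Finset.card_eq_zero.mp (Nat.le_zero.mp hcard)
    have hval : ∀ x, P x = 0 ∨ P x = 1 / n := by
      intro x
      by_contra h
      push_neg at h
      have hmem : x ∈ Finset.univ.filter (fun x => 0 < P x ∧ P x < 1 / n) := by
        simp only [Finset.mem_filter, Finset.mem_univ, true_and]
        exact ⟨lt_of_le_of_ne (hP0 x) (Ne.symm h.1), lt_of_le_of_ne (hPb x) h.2⟩
      rw [hfe] at hmem
      exact absurd hmem (Finset.notMem_empty x)
    set A := Finset.univ.filter (fun x => P x ≠ 0) with hA
    have hsum : ∑ x, P x = (A.card : ℝ) * (1 / n) := by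
      rw [← Finset.sum_filter_ne_zero Finset.univ]
      rw [Finset.sum_congr rfl (fun x hx => ?_), Finset.sum_const, nsmul_eq_mul]
      rcases hval x with h | h
      · simp [hA, h] at hx
      · exact h
    have hcardA : A.card = n := by
      rw [hPs] at hsum
      have : (A.card : ℝ) = n := by
        field_simp at hsum
        exact_mod_cast hsum.symm
      exact_mod_cast this
    refine ⟨fun B => if B = A then 1 else 0, ?_, ?_, ?_, ?_⟩
    · intro B; dsimp only; split <;> norm_num
    · simp
    · intro B hB
      by_cases h : B = A
      · rw [h, hcardA]
      · simp [h] at hB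
    · intro x
      rw [Finset.sum_eq_single A (fun B _ hB => by simp [hB])
        (fun h => absurd (Finset.mem_univ A) h)]
      dsimp only
      rw [if_pos rfl, one_mul]
      by_cases hx : x ∈ A
      · rw [if_pos hx]
        have hne : P x ≠ 0 := by simpa [hA] using hx
        rcases hval x with h | h
        · exact absurd h hne
        · exact h
      · rw [if_neg hx]
        have hne : ¬ P x ≠ 0 := by simpa [hA] using hx
        push_neg at hne; exact hne
  | succ k ih =>
    intro P hP0 hPb hPs hcard
    by_cases hle : (Finset.univ.filter (fun x => 0 < P x ∧ P x < 1 / n)).card ≤ k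
    · exact ih P hP0 hPb hPs hle
    push_neg at hle
    set F := Finset.univ.filter (fun x => 0 < P x ∧ P x < 1 / n) with hF
    -- F has at least 2 elements
    have h2 : 2 ≤ F.card := by
      by_contra h
      push_neg at h
      have h1 : F.card = 1 := by omega
      obtain ⟨x₀, hx₀⟩ := Finset.card_eq_one.mp h1
      have hx₀m : 0 < P x₀ ∧ P x₀ < 1 / n := by
        have : x₀ ∈ F := by rw [hx₀]; exact Finset.mem_singleton_self x₀
        simpa [hF] using this
      have hval : ∀ x, x ≠ x₀ → P x = 0 ∨ P x = 1 / n := by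
        intro x hx
        by_contra h'
        push_neg at h'
        have : x ∈ F := by
          simp only [hF, Finset.mem_filter, Finset.mem_univ, true_and]
          exact ⟨lt_of_le_of_ne (hP0 x) (Ne.symm h'.1), lt_of_le_of_ne (hPb x) h'.2⟩
        rw [hx₀] at this
        exact hx (Finset.mem_singleton.mp this)
      set E := Finset.univ.erase x₀ with hE
      set c := (E.filter (fun x => P x = 1 / n)).card with hc
      have hsumE : ∑ x ∈ E, P x = (c : ℝ) * (1 / n) := by
        have : ∑ x ∈ E, P x = ∑ x ∈ E, (if P x = 1 / n then (1:ℝ) / n else 0) := by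
          refine Finset.sum_congr rfl (fun x hx => ?_)
          rcases hval x (Finset.ne_of_mem_erase hx) with h | h
          · rw [h, if_neg]; exact fun hh => absurd hh.symm (ne_of_gt hn0')
          · simp [h]
        rw [this, ← Finset.sum_filter, Finset.sum_const, nsmul_eq_mul, hc]
      have hsplit : P x₀ + ∑ x ∈ E, P x = 1 := by
        rw [← hPs, hE, Finset.add_sum_erase _ _ (Finset.mem_univ x₀)]
      rw [hsumE] at hsplit
      have hinv : (1 / (n:ℝ)) * n = 1 := by field_simp
      have e1 : (c:ℝ) * (1 / n) < 1 := by linarith [hx₀m.1]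
      have h1' := mul_lt_mul_of_pos_right e1 hn0
      rw [mul_assoc, hinv, mul_one, one_mul] at h1'
      have hcn1 : (c : ℝ) < n := h1'
      have e2 : (1:ℝ) < ((c:ℝ) + 1) * (1 / n) := by
        rw [add_mul, one_mul]; linarith [hx₀m.2]
      have h2' := mul_lt_mul_of_pos_right e2 hn0
      rw [mul_assoc, hinv, mul_one, one_mul] at h2'
      have hcn2 : (n : ℝ) < c + 1 := h2'
      have : n ≤ c := by exact_mod_cast Nat.lt_succ_iff.mp (by exact_mod_cast hcn2)
      exact absurd hcn1 (not_lt.mpr (by exact_mod_cast this))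
    obtain ⟨x₁, hx₁F, x₂, hx₂F, hx12⟩ := Finset.one_lt_card.mp h2
    have hx₁ : 0 < P x₁ ∧ P x₁ < 1 / n := by simpa [hF] using hx₁F
    have hx₂ : 0 < P x₂ ∧ P x₂ < 1 / n := by simpa [hF] using hx₂F
    set t : ℝ := min (P x₁) (1 / n - P x₂) with ht
    set t' : ℝ := min (P x₂) (1 / n - P x₁) with ht'
    have ht0 : 0 < t := lt_min hx₁.1 (by linarith [hx₂.2])
    have ht'0 : 0 < t' := lt_min hx₂.1 (by linarith [hx₁.2])
    have htt : 0 < t + t' := by linarith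
    have ht1 : t ≤ P x₁ := min_le_left _ _
    have ht2 : t ≤ 1 / n - P x₂ := min_le_right _ _
    have ht'1 : t' ≤ P x₂ := min_le_left _ _
    have ht'2 : t' ≤ 1 / n - P x₁ := min_le_right _ _
    set Q : 𝒳 → ℝ := fun x => P x + (if x = x₂ then t else 0) - (if x = x₁ then t else 0)
      with hQ
    set R : 𝒳 → ℝ := fun x => P x + (if x = x₁ then t' else 0) - (if x = x₂ then t' else 0)
      with hR
    have hQx₁ : Q x₁ = P x₁ - t := by simp [hQ, hx12]
    have hQx₂ : Q x₂ = P x₂ + t := by simp [hQ, hx12.symm]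
    have hQo : ∀ x, x ≠ x₁ → x ≠ x₂ → Q x = P x := by intro x h1 h2; simp [hQ, h1, h2]
    have hRx₁ : R x₁ = P x₁ + t' := by simp [hR, hx12]
    have hRx₂ : R x₂ = P x₂ - t' := by simp [hR, hx12.symm]
    have hRo : ∀ x, x ≠ x₁ → x ≠ x₂ → R x = P x := by intro x h1 h2; simp [hR, h1, h2]
    have hQ0 : ∀ x, 0 ≤ Q x := by
      intro x
      by_cases h1 : x = x₁
      · rw [h1, hQx₁]; linarith
      by_cases h2 : x = x₂
      · rw [h2, hQx₂]; linarith [hx₂.1]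
      · rw [hQo x h1 h2]; exact hP0 x
    have hQb : ∀ x, Q x ≤ 1 / n := by
      intro x
      by_cases h1 : x = x₁
      · rw [h1, hQx₁]; linarith [hx₁.2]
      by_cases h2 : x = x₂
      · rw [h2, hQx₂]; linarith
      · rw [hQo x h1 h2]; exact hPb x
    have hR0 : ∀ x, 0 ≤ R x := by
      intro x
      by_cases h1 : x = x₁
      · rw [h1, hRx₁]; linarith [hx₁.1]
      by_cases h2 : x = x₂
      · rw [h2, hRx₂]; linarith
      · rw [hRo x h1 h2]; exact hP0 x
    have hRb : ∀ x, R x ≤ 1 / n := by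
      intro x
      by_cases h1 : x = x₁
      · rw [h1, hRx₁]; linarith
      by_cases h2 : x = x₂
      · rw [h2, hRx₂]; linarith [hx₂.2]
      · rw [hRo x h1 h2]; exact hPb x
    have hQs : ∑ x, Q x = 1 := by
      simp only [hQ]
      rw [Finset.sum_sub_distrib, Finset.sum_add_distrib, hPs]
      simp
    have hRs : ∑ x, R x = 1 := by
      simp only [hR]
      rw [Finset.sum_sub_distrib, Finset.sum_add_distrib, hPs]
      simp
    -- filter subsets
    have hsubQ : Finset.univ.filter (fun x => 0 < Q x ∧ Q x < 1 / n) ⊆ F := by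
      intro x hx
      simp only [Finset.mem_filter, Finset.mem_univ, true_and] at hx
      by_cases h1 : x = x₁
      · rw [h1]; exact hx₁F
      by_cases h2 : x = x₂
      · rw [h2]; exact hx₂F
      · simp only [hF, Finset.mem_filter, Finset.mem_univ, true_and]
        rw [hQo x h1 h2] at hx; exact hx
    have hsubR : Finset.univ.filter (fun x => 0 < R x ∧ R x < 1 / n) ⊆ F := by
      intro x hx
      simp only [Finset.mem_filter, Finset.mem_univ, true_and] at hx
      by_cases h1 : x = x₁
      · rw [h1]; exact hx₁F
      by_cases h2 : x = x₂
      · rw [h2]; exact hx₂F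
      · simp only [hF, Finset.mem_filter, Finset.mem_univ, true_and]
        rw [hRo x h1 h2] at hx; exact hx
    have hQcard : (Finset.univ.filter (fun x => 0 < Q x ∧ Q x < 1 / n)).card ≤ k := by
      have hss : Finset.univ.filter (fun x => 0 < Q x ∧ Q x < 1 / n) ⊂ F := by
        refine Finset.ssubset_iff_of_subset hsubQ |>.mpr ?_
        rcases min_cases (P x₁) (1 / n - P x₂) with ⟨heq, _⟩ | ⟨heq, _⟩
        · refine ⟨x₁, hx₁F, ?_⟩
          have hz : Q x₁ = 0 := by rw [hQx₁, ht, heq]; ring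
          intro hmem
          simp only [Finset.mem_filter, Finset.mem_univ, true_and] at hmem
          rw [hz] at hmem
          exact lt_irrefl 0 hmem.1
        · refine ⟨x₂, hx₂F, ?_⟩
          have hz : Q x₂ = 1 / n := by rw [hQx₂, ht, heq]; ring
          intro hmem
          simp only [Finset.mem_filter, Finset.mem_univ, true_and] at hmem
          rw [hz] at hmem
          exact lt_irrefl _ hmem.2
      have := Finset.card_lt_card hss
      omega
    have hRcard : (Finset.univ.filter (fun x => 0 < R x ∧ R x < 1 / n)).card ≤ k := by
      have hss : Finset.univ.filter (fun x => 0 < R x ∧ R x < 1 / n) ⊂ F := by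
        refine Finset.ssubset_iff_of_subset hsubR |>.mpr ?_
        rcases min_cases (P x₂) (1 / n - P x₁) with ⟨heq, _⟩ | ⟨heq, _⟩
        · refine ⟨x₂, hx₂F, ?_⟩
          have hz : R x₂ = 0 := by rw [hRx₂, ht', heq]; ring
          intro hmem
          simp only [Finset.mem_filter, Finset.mem_univ, true_and] at hmem
          rw [hz] at hmem
          exact lt_irrefl 0 hmem.1
        · refine ⟨x₁, hx₁F, ?_⟩
          have hz : R x₁ = 1 / n := by rw [hRx₁, ht', heq]; ring
          intro hmem
          simp only [Finset.mem_filter, Finset.mem_univ, true_and] at hmem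
          rw [hz] at hmem
          exact lt_irrefl _ hmem.2
      have := Finset.card_lt_card hss
      omega
    obtain ⟨w₁, hw₁0, hw₁s, hw₁c, hw₁e⟩ := ih Q hQ0 hQb hQs hQcard
    obtain ⟨w₂, hw₂0, hw₂s, hw₂c, hw₂e⟩ := ih R hR0 hRb hRs hRcard
    set lam : ℝ := t' / (t + t') with hlam
    have hlam0 : 0 ≤ lam := by positivity
    have hlam1 : lam ≤ 1 := by
      rw [hlam, div_le_one htt]; linarith
    have hconv : ∀ x, P x = lam * Q x + (1 - lam) * R x := by
      intro x
      by_cases h1 : x = x₁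
      · rw [h1, hQx₁, hRx₁, hlam]; field_simp; ring
      by_cases h2 : x = x₂
      · rw [h2, hQx₂, hRx₂, hlam]; field_simp; ring
      · rw [hQo x h1 h2, hRo x h1 h2]; ring
    refine ⟨fun A => lam * w₁ A + (1 - lam) * w₂ A, ?_, ?_, ?_, ?_⟩
    · intro A
      dsimp only
      have h1 := mul_nonneg hlam0 (hw₁0 A)
      have h2 := mul_nonneg (by linarith : (0:ℝ) ≤ 1 - lam) (hw₂0 A)
      linarith
    · rw [Finset.sum_add_distrib, ← Finset.mul_sum, ← Finset.mul_sum, hw₁s, hw₂s]; ring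
    · intro A hA
      dsimp only at hA
      by_cases h1 : w₁ A = 0
      · by_cases h2 : w₂ A = 0
        · exfalso; apply hA; rw [h1, h2]; ring
        · exact hw₂c A h2
      · exact hw₁c A h1
    · intro x
      rw [hconv x, hw₁e x, hw₂e x, Finset.mul_sum, Finset.mul_sum, ← Finset.sum_add_distrib]
      exact Finset.sum_congr rfl (fun A _ => by ring)

/-- If `x̄` is a mode of `P_X` and `P_X(x̄) ∈ [1/(N+1), 1/N]`, then for every
`n ∈ {1, …, N}`, `P_X` is a finite convex combination of distributions each uniform on a
subset of `𝒳` of size exactly `n`. -/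
theorem stmt_10 {𝒳 : Type} [Fintype 𝒳] [DecidableEq 𝒳]
    (P : 𝒳 → ℝ) (hP : ∀ x, 0 ≤ P x) (hPs : ∑ x, P x = 1)
    (xb : 𝒳) (hmode : ∀ x, P x ≤ P xb)
    (N : ℕ) (hN1 : 1 / (N + 1 : ℝ) ≤ P xb) (hN2 : P xb ≤ 1 / (N : ℝ))
    (n : ℕ) (hn1 : 1 ≤ n) (hnN : n ≤ N) :
    ∃ w : Finset 𝒳 → ℝ, (∀ A, 0 ≤ w A) ∧ (∑ A : Finset 𝒳, w A = 1) ∧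
      (∀ A, w A ≠ 0 → A.card = n) ∧
      ∀ x, P x = ∑ A : Finset 𝒳, w A * (if x ∈ A then (1 : ℝ) / n else 0) := by
  have hn0 : (0:ℝ) < n := by positivity
  have hNn : (n : ℝ) ≤ N := by exact_mod_cast hnN
  have hbound : ∀ x, P x ≤ 1 / n := by
    intro x
    calc P x ≤ P xb := hmode x
    _ ≤ 1 / N := hN2
    _ ≤ 1 / n := by apply one_div_le_one_div_of_le hn0 hNn
  exact aux_decomp n hn1 _ P hP hbound hPs le_rfl
end

section
/- Under a joint distribution where (X_t, Y_t) − (Ū^n, S^{t−1}) − (M, W^{t−1}) and (X_t, Y_t) − Ū^n − S^{t−1} are Markov chains, the conditional expectation of π(X_t, Y_t, Z_t*) given (S^{t−1}, Ū^n) is at least min over functions z of E[π(X_t, Y_t, z) | Ū^n], for any Z_t* that is a function of (M, W^{t−1}). Consequently the process S_t = Σ_{i≤t} (π(X_i,Y_i,Z_i*) − ρ_i(Ū^n)), where ρ_i(Ū^n) = min_z E[π(X_i,Y_i,z) | Ū^n], is a submartingale conditioned on Ū^n. -/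
/-- Probability of an event under pmf `p` on a finite space. -/
noncomputable def cprob {Ω : Type} [Fintype Ω] (p : Ω → ℝ) (E : Ω → Prop)
    [DecidablePred E] : ℝ :=
  ∑ ω ∈ Finset.univ.filter E, p ω

/-- Conditional expectation of `f` given the event `E`, under pmf `p`. -/
noncomputable def cexp {Ω : Type} [Fintype Ω] (p : Ω → ℝ) (f : Ω → ℝ) (E : Ω → Prop)
    [DecidablePred E] : ℝ :=
  (∑ ω ∈ Finset.univ.filter E, p ω * f ω) / ∑ ω ∈ Finset.univ.filter E, p ω

open scoped Classical

lemma cprob0 {Ω : Type} [Fintype Ω] (p : Ω → ℝ) (E : Ω → Prop) [DecidablePred E] :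
    cprob p E = ∑ ω ∈ Finset.univ.filter E, p ω := rfl

lemma cprob_nonneg {Ω : Type} [Fintype Ω] (p : Ω → ℝ) (hp : ∀ ω, 0 ≤ p ω)
    (E : Ω → Prop) [DecidablePred E] : 0 ≤ cprob p E :=
  Finset.sum_nonneg fun ω _ => hp ω

lemma cprob_congr {Ω : Type} [Fintype Ω] (p : Ω → ℝ) {E F : Ω → Prop}
    [DecidablePred E] [DecidablePred F] (h : ∀ ω, E ω ↔ F ω) :
    cprob p E = cprob p F := by
  unfold cprob
  congr 1
  exact Finset.filter_congr fun ω _ => h ω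

lemma cprob_mono {Ω : Type} [Fintype Ω] (p : Ω → ℝ) (hp : ∀ ω, 0 ≤ p ω)
    {E F : Ω → Prop} [DecidablePred E] [DecidablePred F] (h : ∀ ω, E ω → F ω) :
    cprob p E ≤ cprob p F := by
  apply Finset.sum_le_sum_of_subset_of_nonneg
  · intro x hx
    simp only [Finset.mem_filter, Finset.mem_univ, true_and] at *
    exact h x hx
  · exact fun i _ _ => hp i

lemma sum_fiber {Ω α : Type} [Fintype Ω] [Fintype α] (p : Ω → ℝ) (E : Ω → Prop)
    [DecidablePred E] (g : Ω → α) (f : α → ℝ)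
    [inst : ∀ a : α, DecidablePred fun ω => E ω ∧ g ω = a] :
    ∑ ω ∈ Finset.univ.filter E, p ω * f (g ω)
      = ∑ a : α, @cprob Ω _ p (fun ω => E ω ∧ g ω = a) (inst a) * f a := by
  rw [← Finset.sum_fiberwise (Finset.univ.filter E) g (fun ω => p ω * f (g ω))]
  refine Finset.sum_congr rfl fun a _ => ?_
  rw [Finset.filter_filter]
  rw [cprob0, Finset.sum_mul]
  apply Finset.sum_congr
  · ext x; simp only [Finset.mem_filter]
  · intro x hx
    simp only [Finset.mem_filter] at hx
    rw [hx.2.2]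

lemma cexp_congr {Ω : Type} [Fintype Ω] (p : Ω → ℝ) {f g : Ω → ℝ} (E : Ω → Prop)
    [DecidablePred E] (h : ∀ ω, E ω → f ω = g ω) : cexp p f E = cexp p g E := by
  unfold cexp
  congr 1
  refine Finset.sum_congr rfl fun ω hω => ?_
  rw [h ω (Finset.mem_filter.mp hω).2]

lemma cexp_add_const {Ω : Type} [Fintype Ω] (p : Ω → ℝ) (f : Ω → ℝ) (E : Ω → Prop)
    [DecidablePred E] (c : ℝ) (h : cprob p E ≠ 0) :
    cexp p (fun ω => f ω + c) E = cexp p f E + c := by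
  unfold cprob at h
  unfold cexp
  have : ∑ ω ∈ Finset.univ.filter E, p ω * (f ω + c)
      = (∑ ω ∈ Finset.univ.filter E, p ω * f ω) + c * ∑ ω ∈ Finset.univ.filter E, p ω := by
    rw [Finset.mul_sum]
    rw [← Finset.sum_add_distrib]
    exact Finset.sum_congr rfl fun ω _ => by ring
  rw [this, add_div, mul_div_assoc, div_self h, mul_one]

open scoped Classical in
/-- Suppose `Z_t* = z_t(M, W^{t−1})`, `ρ_t(ū) = min_z E[π(X_t,Y_t,z) | Ū = ū]`,
and `S_t = ∑_{i ≤ t} (π(X_i,Y_i,Z_i*) − ρ_i(Ū))`.  If the Markov chains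
`(X_t, Y_t) − (Ū, S^{t−1}) − (M, W^{t−1})` and `(X_t, Y_t) − Ū − S^{t−1}` hold, then whenever
the conditioning event `{S^{t−1} = v, Ū = u}` has positive probability,
`E[π(X_t,Y_t,Z_t*) | S^{t−1} = v, Ū = u] ≥ ρ_t(u)`; consequently `S` is a submartingale
conditioned on `Ū`: `E[S_t | S^{t−1} = v, Ū = u] ≥ S_{t−1} (= v_{t−1}, or 0 for t = 0)`. -/
theorem stmt_16 {Ω 𝒳 𝒴 𝒵 𝒰 ℳ 𝒲 : Type} [Fintype Ω] [Fintype 𝒳] [Fintype 𝒴] [Fintype 𝒵]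
    [Fintype 𝒰] [Fintype ℳ] [Fintype 𝒲] [Nonempty 𝒵]
    (p : Ω → ℝ) (hp : ∀ ω, 0 ≤ p ω) (hps : ∑ ω, p ω = 1)
    {T : ℕ} (X : Fin T → Ω → 𝒳) (Y : Fin T → Ω → 𝒴) (Ubar : Ω → 𝒰)
    (M : Ω → ℳ) (W : Fin T → Ω → 𝒲)
    (π : 𝒳 → 𝒴 → 𝒵 → ℝ)
    (z : (t : Fin T) → ℳ → (Fin t.1 → 𝒲) → 𝒵)
    (ρ : Fin T → 𝒰 → ℝ)
    (hρ : ∀ (t : Fin T) (u : 𝒰), ρ t u =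
      ⨅ zz : 𝒵, cexp p (fun ω => π (X t ω) (Y t ω) zz) (fun ω => Ubar ω = u))
    (Zstar : Fin T → Ω → 𝒵)
    (hZ : ∀ (t : Fin T) (ω : Ω),
      Zstar t ω = z t (M ω) (fun i : Fin t.1 => W ⟨i.1, i.2.trans t.2⟩ ω))
    (S : Fin T → Ω → ℝ)
    (hS : ∀ (t : Fin T) (ω : Ω), S t ω =
      ∑ i ∈ Finset.univ.filter (fun i : Fin T => i ≤ t),
        (π (X i ω) (Y i ω) (Zstar i ω) - ρ i (Ubar ω)))
    -- Markov chain (X_t, Y_t) − (Ū, S^{t−1}) − (M, W^{t−1}):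
    (hMC1 : ∀ (t : Fin T) (a : 𝒳 × 𝒴) (c : 𝒰 × (Fin t.1 → ℝ)) (b : ℳ × (Fin t.1 → 𝒲)),
      cprob p (fun ω => (X t ω, Y t ω) = a ∧
          (Ubar ω, fun i : Fin t.1 => S ⟨i.1, i.2.trans t.2⟩ ω) = c ∧
          (M ω, fun i : Fin t.1 => W ⟨i.1, i.2.trans t.2⟩ ω) = b)
        * cprob p (fun ω => (Ubar ω, fun i : Fin t.1 => S ⟨i.1, i.2.trans t.2⟩ ω) = c)
      = cprob p (fun ω => (X t ω, Y t ω) = a ∧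
          (Ubar ω, fun i : Fin t.1 => S ⟨i.1, i.2.trans t.2⟩ ω) = c)
        * cprob p (fun ω => (Ubar ω, fun i : Fin t.1 => S ⟨i.1, i.2.trans t.2⟩ ω) = c ∧
          (M ω, fun i : Fin t.1 => W ⟨i.1, i.2.trans t.2⟩ ω) = b))
    -- Markov chain (X_t, Y_t) − Ū − S^{t−1}:
    (hMC2 : ∀ (t : Fin T) (a : 𝒳 × 𝒴) (u : 𝒰) (s : Fin t.1 → ℝ),
      cprob p (fun ω => (X t ω, Y t ω) = a ∧ Ubar ω = u ∧
          (fun i : Fin t.1 => S ⟨i.1, i.2.trans t.2⟩ ω) = s)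
        * cprob p (fun ω => Ubar ω = u)
      = cprob p (fun ω => (X t ω, Y t ω) = a ∧ Ubar ω = u)
        * cprob p (fun ω => Ubar ω = u ∧
          (fun i : Fin t.1 => S ⟨i.1, i.2.trans t.2⟩ ω) = s)) :
    ∀ (t : Fin T) (v : Fin t.1 → ℝ) (u : 𝒰),
      0 < cprob p (fun ω => Ubar ω = u ∧
          (fun i : Fin t.1 => S ⟨i.1, i.2.trans t.2⟩ ω) = v) →
      (cexp p (fun ω => π (X t ω) (Y t ω) (Zstar t ω))
          (fun ω => Ubar ω = u ∧ (fun i : Fin t.1 => S ⟨i.1, i.2.trans t.2⟩ ω) = v)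
        ≥ ρ t u) ∧
      (cexp p (S t)
          (fun ω => Ubar ω = u ∧ (fun i : Fin t.1 => S ⟨i.1, i.2.trans t.2⟩ ω) = v)
        ≥ if h : 0 < t.1 then v ⟨t.1 - 1, by omega⟩ else 0) := by
  intro t v u hpos
  set E : Ω → Prop :=
    fun ω => Ubar ω = u ∧ (fun i : Fin t.1 => S ⟨i.1, i.2.trans t.2⟩ ω) = v with hE
  have hPU : 0 < cprob p (fun ω => Ubar ω = u) :=
    lt_of_lt_of_le hpos (cprob_mono p hp fun ω h => h.1)
  -- key factorization identity
  have key : ∀ (a : 𝒳 × 𝒴) (b : ℳ × (Fin t.1 → 𝒲)),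
      cprob p (fun ω => E ω ∧
          ((X t ω, Y t ω), (M ω, fun i : Fin t.1 => W ⟨i.1, i.2.trans t.2⟩ ω)) = (a, b))
        * cprob p (fun ω => Ubar ω = u)
      = cprob p (fun ω => Ubar ω = u ∧ (X t ω, Y t ω) = a)
        * cprob p (fun ω => E ω ∧
            (M ω, fun i : Fin t.1 => W ⟨i.1, i.2.trans t.2⟩ ω) = b) := by
    intro a b
    have h1 := hMC1 t a (u, v) b
    have h2 := hMC2 t a u v
    have e1 : cprob p (fun ω => (X t ω, Y t ω) = a ∧
          (Ubar ω, fun i : Fin t.1 => S ⟨i.1, i.2.trans t.2⟩ ω) = (u, v) ∧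
          (M ω, fun i : Fin t.1 => W ⟨i.1, i.2.trans t.2⟩ ω) = b)
        = cprob p (fun ω => E ω ∧
          ((X t ω, Y t ω), (M ω, fun i : Fin t.1 => W ⟨i.1, i.2.trans t.2⟩ ω)) = (a, b)) :=
      cprob_congr p fun ω => by simp only [hE, Prod.mk.injEq]; tauto
    have e2 : cprob p (fun ω =>
          (Ubar ω, fun i : Fin t.1 => S ⟨i.1, i.2.trans t.2⟩ ω) = ((u, v) : 𝒰 × (Fin t.1 → ℝ)))
        = cprob p E :=
      cprob_congr p fun ω => by simp only [hE, Prod.mk.injEq]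
    have e3 : cprob p (fun ω => (X t ω, Y t ω) = a ∧
          (Ubar ω, fun i : Fin t.1 => S ⟨i.1, i.2.trans t.2⟩ ω) = (u, v))
        = cprob p (fun ω => (X t ω, Y t ω) = a ∧ Ubar ω = u ∧
          (fun i : Fin t.1 => S ⟨i.1, i.2.trans t.2⟩ ω) = v) :=
      cprob_congr p fun ω => by simp only [Prod.mk.injEq]
    have e4 : cprob p (fun ω =>
          (Ubar ω, fun i : Fin t.1 => S ⟨i.1, i.2.trans t.2⟩ ω) = (u, v) ∧
          (M ω, fun i : Fin t.1 => W ⟨i.1, i.2.trans t.2⟩ ω) = b)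
        = cprob p (fun ω => E ω ∧
          (M ω, fun i : Fin t.1 => W ⟨i.1, i.2.trans t.2⟩ ω) = b) :=
      cprob_congr p fun ω => by simp only [hE, Prod.mk.injEq]
    have e5 : cprob p (fun ω => Ubar ω = u ∧
          (fun i : Fin t.1 => S ⟨i.1, i.2.trans t.2⟩ ω) = v) = cprob p E :=
      cprob_congr p fun ω => by simp only [hE]
    have e6 : cprob p (fun ω => (X t ω, Y t ω) = a ∧ Ubar ω = u)
        = cprob p (fun ω => Ubar ω = u ∧ (X t ω, Y t ω) = a) :=
      cprob_congr p fun ω => and_comm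
    rw [e1, e2, e3, e4] at h1
    rw [e5, e6] at h2
    refine mul_right_cancel₀ (ne_of_gt hpos) ?_
    linear_combination cprob p (fun ω => Ubar ω = u) * h1
      + cprob p (fun ω => E ω ∧
          (M ω, fun i : Fin t.1 => W ⟨i.1, i.2.trans t.2⟩ ω) = b) * h2
  -- per-z lower bound on the conditional expectation given Ubar = u
  have hx : ∀ zz : 𝒵, ρ t u * cprob p (fun ω => Ubar ω = u)
      ≤ ∑ a : 𝒳 × 𝒴,
          cprob p (fun ω => Ubar ω = u ∧ (X t ω, Y t ω) = a) * π a.1 a.2 zz := by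
    intro zz
    have h0 : ρ t u ≤ cexp p (fun ω => π (X t ω) (Y t ω) zz) (fun ω => Ubar ω = u) := by
      rw [hρ t u]; exact ciInf_le (Set.finite_range _).bddBelow zz
    have hc : cexp p (fun ω => π (X t ω) (Y t ω) zz) (fun ω => Ubar ω = u)
        = (∑ ω ∈ Finset.univ.filter (fun ω => Ubar ω = u), p ω * π (X t ω) (Y t ω) zz)
          / cprob p (fun ω => Ubar ω = u) := rfl
    rw [hc, le_div_iff₀ hPU] at h0
    have h2 : (∑ ω ∈ Finset.univ.filter (fun ω => Ubar ω = u), p ω * π (X t ω) (Y t ω) zz)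
        = ∑ a : 𝒳 × 𝒴,
            cprob p (fun ω => Ubar ω = u ∧ (X t ω, Y t ω) = a) * π a.1 a.2 zz :=
      sum_fiber p (fun ω => Ubar ω = u) (fun ω => (X t ω, Y t ω)) (fun a => π a.1 a.2 zz)
    rw [h2] at h0
    exact h0
  -- decomposition of the numerator over fibers of ((X,Y),(M,W))
  have hNum : (∑ ω ∈ Finset.univ.filter E, p ω * π (X t ω) (Y t ω) (Zstar t ω))
      = ∑ ab : (𝒳 × 𝒴) × (ℳ × (Fin t.1 → 𝒲)),
          cprob p (fun ω => E ω ∧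
            ((X t ω, Y t ω), (M ω, fun i : Fin t.1 => W ⟨i.1, i.2.trans t.2⟩ ω)) = ab)
            * π ab.1.1 ab.1.2 (z t ab.2.1 ab.2.2) := by
    refine Eq.trans (Finset.sum_congr rfl fun ω _ => ?_)
      (sum_fiber p E
        (fun ω => ((X t ω, Y t ω), (M ω, fun i : Fin t.1 => W ⟨i.1, i.2.trans t.2⟩ ω)))
        (fun ab => π ab.1.1 ab.1.2 (z t ab.2.1 ab.2.2)))
    rw [hZ t ω]
  -- total probability over fibers of (M, W)
  have hBtot : ∑ b : ℳ × (Fin t.1 → 𝒲),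
      cprob p (fun ω => E ω ∧
        (M ω, fun i : Fin t.1 => W ⟨i.1, i.2.trans t.2⟩ ω) = b) = cprob p E := by
    have h1 : ∑ b : ℳ × (Fin t.1 → 𝒲),
        cprob p (fun ω => E ω ∧
          (M ω, fun i : Fin t.1 => W ⟨i.1, i.2.trans t.2⟩ ω) = b) * (1:ℝ)
        = ∑ ω ∈ Finset.univ.filter E, p ω * (1:ℝ) :=
      (sum_fiber p E (fun ω => (M ω, fun i : Fin t.1 => W ⟨i.1, i.2.trans t.2⟩ ω))
        (fun _ => (1:ℝ))).symm
    simp only [mul_one] at h1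
    rw [h1]
    rfl
  -- main inequality multiplied by P(Ubar = u)
  have hNum2 : ρ t u * cprob p E * cprob p (fun ω => Ubar ω = u)
      ≤ (∑ ω ∈ Finset.univ.filter E, p ω * π (X t ω) (Y t ω) (Zstar t ω))
        * cprob p (fun ω => Ubar ω = u) := by
    rw [hNum, Finset.sum_mul]
    have hre : ∑ ab : (𝒳 × 𝒴) × (ℳ × (Fin t.1 → 𝒲)),
        cprob p (fun ω => E ω ∧
          ((X t ω, Y t ω), (M ω, fun i : Fin t.1 => W ⟨i.1, i.2.trans t.2⟩ ω)) = ab)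
          * π ab.1.1 ab.1.2 (z t ab.2.1 ab.2.2) * cprob p (fun ω => Ubar ω = u)
        = ∑ b : ℳ × (Fin t.1 → 𝒲),
            cprob p (fun ω => E ω ∧
              (M ω, fun i : Fin t.1 => W ⟨i.1, i.2.trans t.2⟩ ω) = b)
            * ∑ a : 𝒳 × 𝒴,
                cprob p (fun ω => Ubar ω = u ∧ (X t ω, Y t ω) = a)
                  * π a.1 a.2 (z t b.1 b.2) := by
      rw [Fintype.sum_prod_type_right]
      refine Finset.sum_congr rfl fun b _ => ?_
      rw [Finset.mul_sum]
      refine Finset.sum_congr rfl fun a _ => ?_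
      rw [mul_right_comm, key a b]
      ring
    rw [hre]
    calc ρ t u * cprob p E * cprob p (fun ω => Ubar ω = u)
        = ∑ b : ℳ × (Fin t.1 → 𝒲),
            cprob p (fun ω => E ω ∧
              (M ω, fun i : Fin t.1 => W ⟨i.1, i.2.trans t.2⟩ ω) = b)
            * (ρ t u * cprob p (fun ω => Ubar ω = u)) := by
          rw [← Finset.sum_mul, hBtot]; ring
      _ ≤ _ := by
          refine Finset.sum_le_sum fun b _ => ?_
          exact mul_le_mul_of_nonneg_left (hx (z t b.1 b.2)) (cprob_nonneg p hp _)
  -- part (a)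
  have ha : ρ t u ≤ cexp p (fun ω => π (X t ω) (Y t ω) (Zstar t ω)) E := by
    have h3 : ρ t u * cprob p E
        ≤ ∑ ω ∈ Finset.univ.filter E, p ω * π (X t ω) (Y t ω) (Zstar t ω) :=
      le_of_mul_le_mul_right hNum2 hPU
    have hc : cexp p (fun ω => π (X t ω) (Y t ω) (Zstar t ω)) E
        = (∑ ω ∈ Finset.univ.filter E, p ω * π (X t ω) (Y t ω) (Zstar t ω))
          / cprob p E := rfl
    rw [hc, le_div_iff₀ hpos]
    exact h3
  refine ⟨ha, ?_⟩
  -- part (b)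
  have hne : cprob p E ≠ 0 := ne_of_gt hpos
  rcases Nat.eq_zero_or_pos t.1 with h0 | h0
  · rw [dif_neg (by omega)]
    have hb : ∀ ω, E ω → S t ω
        = π (X t ω) (Y t ω) (Zstar t ω) + (0 - ρ t u) := by
      intro ω hω
      simp only [hE] at hω
      obtain ⟨hU, hV⟩ := hω
      rw [hS t ω]
      have hsplit : Finset.univ.filter (fun i : Fin T => i ≤ t)
          = insert t (Finset.univ.filter (fun i : Fin T => i < t)) := by
        ext i
        simp only [Finset.mem_filter, Finset.mem_univ, true_and, Finset.mem_insert,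
          le_iff_lt_or_eq]
        tauto
      rw [hsplit, Finset.sum_insert (by simp)]
      have hempty : Finset.univ.filter (fun i : Fin T => i < t) = (∅ : Finset (Fin T)) := by
        ext i
        simp only [Finset.mem_filter, Finset.mem_univ, true_and, Finset.notMem_empty,
          iff_false, Fin.lt_def]
        omega
      rw [hempty, Finset.sum_empty, hU]
      ring
    rw [cexp_congr p E hb, cexp_add_const p _ E _ hne]
    linarith [ha]
  · have ht' : t.1 - 1 < t.1 := Nat.sub_lt h0 Nat.one_pos
    rw [dif_pos h0]
    show cexp p (S t) E ≥ v ⟨t.1 - 1, ht'⟩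
    have hb : ∀ ω, E ω → S t ω
        = π (X t ω) (Y t ω) (Zstar t ω) + (v ⟨t.1 - 1, ht'⟩ - ρ t u) := by
      intro ω hω
      simp only [hE] at hω
      obtain ⟨hU, hV⟩ := hω
      rw [hS t ω]
      have hsplit : Finset.univ.filter (fun i : Fin T => i ≤ t)
          = insert t (Finset.univ.filter (fun i : Fin T => i < t)) := by
        ext i
        simp only [Finset.mem_filter, Finset.mem_univ, true_and, Finset.mem_insert,
          le_iff_lt_or_eq]
        tauto
      rw [hsplit, Finset.sum_insert (by simp)]
      have hprev : ∑ i ∈ Finset.univ.filter (fun i : Fin T => i < t),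
          (π (X i ω) (Y i ω) (Zstar i ω) - ρ i (Ubar ω))
          = S ⟨(⟨t.1 - 1, ht'⟩ : Fin t.1).1, ht'.trans t.2⟩ ω := by
        rw [hS ⟨(⟨t.1 - 1, ht'⟩ : Fin t.1).1, ht'.trans t.2⟩ ω]
        apply Finset.sum_congr _ (fun _ _ => rfl)
        ext i
        simp only [Finset.mem_filter, Finset.mem_univ, true_and, Fin.lt_def, Fin.le_def]
        omega
      have hlast := congrFun hV (⟨t.1 - 1, ht'⟩ : Fin t.1)
      simp only at hlast
      rw [hprev, hlast, hU]
      ring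
    rw [cexp_congr p E hb, cexp_add_const p _ E _ hne]
    linarith [ha]
end
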